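/- arXiv:2405.07110 — 5 statements merged into one kernel-verified Lean document; each statement's English description precedes it below -/
import Mathlib

section
/- For every n ≥ 1, the number of tree representations on {1,…,n} equals ∏_{k=2}^{n} (2k−3) (the double factorial (2n−3)!!, with the empty product equal to 1). In particular there are 15 tree representations on {1,2,3,4}. -/
/-- 0-indexed position of the first occurrence of `x` in `v`. -/
def firstOcc (v : List ℕ) (x : ℕ) : ℕ := v.idxOf x

/-- 0-indexed position of the second (= last, when `x` occurs exactly twice)
occurrence of `x` in `v`. -/
def secondOcc (v : List ℕ) (x : ℕ) : ℕ := v.length - 1 - v.reverse.idxOf x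

lemma firstOcc_append_left {u w : List ℕ} {x : ℕ} (h : x ∈ u) :
    firstOcc (u ++ w) x = firstOcc u x := List.idxOf_append_of_mem h

lemma firstOcc_append_right {u w : List ℕ} {x : ℕ} (h : x ∉ u) :
    firstOcc (u ++ w) x = u.length + firstOcc w x := List.idxOf_append_of_notMem h

lemma firstOcc_lt_length {u : List ℕ} {x : ℕ} (h : x ∈ u) : firstOcc u x < u.length :=
  List.idxOf_lt_length_iff.2 h

lemma secondOcc_lt_length {u : List ℕ} (x : ℕ) (h : u ≠ []) : secondOcc u x < u.length := by
  have : 0 < u.length := List.length_pos_iff.2 h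
  unfold secondOcc; omega

lemma secondOcc_append_right {u w : List ℕ} {x : ℕ} (h : x ∈ w) :
    secondOcc (u ++ w) x = u.length + secondOcc w x := by
  have hm : x ∈ w.reverse := by simpa using h
  have hr : w.reverse.idxOf x < w.reverse.length := List.idxOf_lt_length_iff.2 hm
  unfold secondOcc
  rw [List.reverse_append, List.idxOf_append_of_mem hm]
  simp only [List.length_append, List.length_reverse] at *
  omega

lemma secondOcc_append_left {u w : List ℕ} {x : ℕ} (h : x ∉ w) (h2 : x ∈ u) :
    secondOcc (u ++ w) x = secondOcc u x := by
  have hu : x ∈ u.reverse := by simpa using h2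
  have hr : u.reverse.idxOf x < u.reverse.length := List.idxOf_lt_length_iff.2 hu
  have hw : x ∉ w.reverse := by simpa using h
  unfold secondOcc
  rw [List.reverse_append, List.idxOf_append_of_notMem hw]
  simp only [List.length_append, List.length_reverse] at *
  omega

lemma secondOcc_concat_self (u : List ℕ) (m : ℕ) : secondOcc (u ++ [m]) m = u.length := by
  unfold secondOcc
  rw [List.reverse_append]
  simp [List.idxOf_cons_self]

lemma firstOcc_shift {A B : List ℕ} {x m : ℕ} (hx : x ∈ A ++ B) (hxm : x ≠ m) :
    (firstOcc (A ++ B) x < A.length ∧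
      firstOcc (A ++ ([m] ++ (B ++ [m]))) x = firstOcc (A ++ B) x) ∨
    (A.length ≤ firstOcc (A ++ B) x ∧
      firstOcc (A ++ ([m] ++ (B ++ [m]))) x = firstOcc (A ++ B) x + 1) := by
  by_cases hA : x ∈ A
  · left
    rw [firstOcc_append_left hA, firstOcc_append_left hA]
    exact ⟨firstOcc_lt_length hA, rfl⟩
  · right
    have hB : x ∈ B := (List.mem_append.1 hx).resolve_left hA
    rw [firstOcc_append_right hA, firstOcc_append_right hA]
    have h1 : firstOcc ([m] ++ (B ++ [m])) x = (firstOcc (B ++ [m]) x) + 1 := by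
      show List.idxOf x (m :: (B ++ [m])) = _
      rw [List.idxOf_cons_ne _ (Ne.symm hxm)]
      rfl
    rw [h1, firstOcc_append_left hB]
    omega

lemma secondOcc_shift {A B : List ℕ} {x m : ℕ} (hx : x ∈ A ++ B) (hxm : x ≠ m) :
    (secondOcc (A ++ B) x < A.length ∧
      secondOcc (A ++ ([m] ++ (B ++ [m]))) x = secondOcc (A ++ B) x) ∨
    (A.length ≤ secondOcc (A ++ B) x ∧
      secondOcc (A ++ ([m] ++ (B ++ [m]))) x = secondOcc (A ++ B) x + 1) := by
  by_cases hB : x ∈ B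
  · right
    have hBm : x ∈ [m] ++ (B ++ [m]) := by simp [hB]
    have hBm2 : x ∈ B ++ [m] := by simp [hB]
    rw [secondOcc_append_right hB, secondOcc_append_right hBm,
      secondOcc_append_right hBm2, secondOcc_append_left (by simpa using hxm) hB]
    simp only [List.length_singleton]
    omega
  · left
    have hA : x ∈ A := (List.mem_append.1 hx).resolve_right hB
    have hnm : x ∉ [m] ++ (B ++ [m]) := by simp [hB, hxm]
    rw [secondOcc_append_left hB hA, secondOcc_append_left hnm hA]
    exact ⟨secondOcc_lt_length x (List.ne_nil_of_mem hA), rfl⟩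


/-- `v` is a tree representation on `{1,…,n}`: it has length `2n`, entries in
`{1,…,n}`, every `i ∈ {1,…,n}` occurs exactly twice, the first entry is `1`,
for every `i ∈ {2,…,n}` the first occurrence of `i` appears strictly before the
second occurrence of `i-1`, and the second occurrence of `i` appears strictly
after the second occurrence of `i-1`. -/
def IsTreeRep (n : ℕ) (v : List ℕ) : Prop :=
  v.length = 2 * n ∧
  (∀ x ∈ v, 1 ≤ x ∧ x ≤ n) ∧
  (∀ i, 1 ≤ i → i ≤ n → v.count i = 2) ∧
  v.getD 0 0 = 1 ∧
  (∀ i, 2 ≤ i → i ≤ n → firstOcc v i < secondOcc v (i - 1)) ∧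
  (∀ i, 2 ≤ i → i ≤ n → secondOcc v (i - 1) < secondOcc v i)

lemma mem_of_isTreeRep {n : ℕ} {v : List ℕ} (hv : IsTreeRep n v) {i : ℕ}
    (h1 : 1 ≤ i) (h2 : i ≤ n) : i ∈ v := by
  have := hv.2.2.1 i h1 h2
  exact List.count_pos_iff.1 (by omega)

lemma getLast_isTreeRep {n : ℕ} {v : List ℕ} (hn : 1 ≤ n) (hv : IsTreeRep n v)
    (hne : v ≠ []) : v.getLast hne = n := by
  obtain ⟨hlen, hmem, hcount, hhead, hfs, hss⟩ := hv
  set x := v.getLast hne with hx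
  have hxv : x ∈ v := List.getLast_mem hne
  have hxb := hmem x hxv
  have h2 : secondOcc v x = 2 * n - 1 := by
    conv_lhs => rw [← List.dropLast_append_getLast hne]
    rw [secondOcc_concat_self, List.length_dropLast, hlen]
  by_contra hxn
  have h3 := hss (x + 1) (by omega) (by omega)
  simp only [Nat.add_sub_cancel] at h3
  have h4 : secondOcc v (x + 1) < v.length := secondOcc_lt_length _ hne
  omega

lemma secondOcc_top {n : ℕ} {v : List ℕ} (hn : 1 ≤ n) (hv : IsTreeRep n v) :
    secondOcc v n = 2 * n - 1 := by
  have hne : v ≠ [] := by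
    intro h
    have := hv.1
    rw [h] at this
    simp at this
    omega
  have hlast := getLast_isTreeRep hn hv hne
  have hdec : v.dropLast ++ [n] = v := by
    conv_rhs => rw [← List.dropLast_append_getLast hne]
    rw [hlast]
  conv_lhs => rw [← hdec]
  rw [secondOcc_concat_self, List.length_dropLast, hv.1]

/-- Insert `n+1` at position `p` and at the end. -/
def F (n : ℕ) (vp : List ℕ × ℕ) : List ℕ :=
  vp.1.take vp.2 ++ ([n + 1] ++ (vp.1.drop vp.2 ++ [n + 1]))

lemma isTreeRep_F {n : ℕ} {v : List ℕ} {p : ℕ} (hn : 1 ≤ n) (hv : IsTreeRep n v)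
    (hp1 : 1 ≤ p) (hp2 : p ≤ 2 * n - 1) : IsTreeRep (n + 1) (F n (v, p)) := by
  have hsnv : secondOcc v n = 2 * n - 1 := secondOcc_top hn hv
  obtain ⟨hlen, hmem, hcount, hhead, hfs, hss⟩ := hv
  set m := n + 1 with hm_def
  have hm : m ∉ v := fun h => by have := hmem m h; omega
  have hpl : p ≤ v.length := by omega
  set A := v.take p with hA_def
  set B := v.drop p with hB_def
  have hAB : A ++ B = v := List.take_append_drop p v
  have hAl : A.length = p := by rw [hA_def, List.length_take]; omega
  have hBl : B.length = 2 * n - p := by rw [hB_def, List.length_drop, hlen]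
  have hF : F n (v, p) = A ++ ([m] ++ (B ++ [m])) := rfl
  have hmA : m ∉ A := fun h => hm (List.mem_of_mem_take h)
  have hmB : m ∉ B := fun h => hm (List.mem_of_mem_drop h)
  have hin : ∀ j, 1 ≤ j → j ≤ n → j ∈ A ++ B := by
    intro j hj1 hj2
    rw [hAB]
    have := hcount j hj1 hj2
    exact List.count_pos_iff.1 (by omega)
  -- occurrence positions of m
  have hfm : firstOcc (F n (v, p)) m = p := by
    rw [hF, firstOcc_append_right hmA, hAl]
    show p + List.idxOf m (m :: (B ++ [m])) = p
    rw [List.idxOf_cons_self]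
    omega
  have hsm : secondOcc (F n (v, p)) m = 2 * n + 1 := by
    have h2 : F n (v, p) = (A ++ ([m] ++ B)) ++ [m] := by simp [hF]
    rw [h2, secondOcc_concat_self]
    simp only [List.length_append, List.length_singleton]
    omega
  have hsn : secondOcc (F n (v, p)) n = 2 * n := by
    rcases secondOcc_shift (B := B) (m := m) (hin n hn le_rfl) (by omega) with
      ⟨hlt, heq⟩ | ⟨hge, heq⟩ <;> rw [hAB] at * <;> rw [← hF] at heq <;> omega
  refine ⟨?_, ?_, ?_, ?_, ?_, ?_⟩
  · rw [hF]
    simp only [List.length_append, List.length_singleton, hAl, hBl]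
    omega
  · intro x hx
    rw [hF] at hx
    simp only [List.mem_append, List.mem_singleton] at hx
    rcases hx with h | h | h | h
    · have := hmem x (List.mem_of_mem_take h); omega
    · omega
    · have := hmem x (List.mem_of_mem_drop h); omega
    · omega
  · intro i h1 h2
    have hcv : List.count i A + List.count i B = List.count i v := by
      rw [← List.count_append, hAB]
    by_cases him : i = m
    · subst him
      have hA0 : List.count m A = 0 := List.count_eq_zero.2 hmA
      have hB0 : List.count m B = 0 := List.count_eq_zero.2 hmB
      rw [hF]
      simp [List.count_append, hA0, hB0]
    · have h2' : i ≤ n := by omega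
      have hs : List.count i [m] = 0 := List.count_eq_zero.2 (by simp [him])
      have := hcount i h1 h2'
      rw [hF]
      simp only [List.count_append, hs]
      omega
  · have h0A : 0 < A.length := by omega
    have h0v : 0 < v.length := by omega
    rw [hF, List.getD_append _ _ _ 0 h0A, List.getD_eq_getElem _ _ h0A]
    have h3 : A[0]'h0A = v[0]'h0v := List.getElem_take
    rw [h3, ← List.getD_eq_getElem v 0 h0v]
    exact hhead
  · intro i h1 h2
    by_cases hi : i = m
    · rw [hi]
      have h3 : m - 1 = n := by omega
      rw [h3, hfm, hsn]
      omega
    · have h2' : i ≤ n := by omega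
      have h1' : 1 ≤ i - 1 := by omega
      have h2'' : i - 1 ≤ n := by omega
      have hfi := firstOcc_shift (B := B) (m := m) (hin i (by omega) h2') (by omega)
      have hsi := secondOcc_shift (B := B) (m := m) (hin (i - 1) h1' h2'') (by omega)
      rw [hAB, ← hF] at hfi hsi
      have := hfs i h1 h2'
      rcases hfi with ⟨hlt1, heq1⟩ | ⟨hge1, heq1⟩ <;>
        rcases hsi with ⟨hlt2, heq2⟩ | ⟨hge2, heq2⟩ <;> omega
  · intro i h1 h2
    by_cases hi : i = m
    · rw [hi]
      have h3 : m - 1 = n := by omega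
      rw [h3, hsn, hsm]
      omega
    · have h2' : i ≤ n := by omega
      have h1' : 1 ≤ i - 1 := by omega
      have h2'' : i - 1 ≤ n := by omega
      have hsi := secondOcc_shift (B := B) (m := m) (hin i (by omega) h2') (by omega)
      have hsi' := secondOcc_shift (B := B) (m := m) (hin (i - 1) h1' h2'') (by omega)
      rw [hAB, ← hF] at hsi hsi'
      have := hss i h1 h2'
      rcases hsi with ⟨hlt1, heq1⟩ | ⟨hge1, heq1⟩ <;>
        rcases hsi' with ⟨hlt2, heq2⟩ | ⟨hge2, heq2⟩ <;> omega

lemma exists_pre {n : ℕ} (hn : 1 ≤ n) {w : List ℕ} (hw : IsTreeRep (n + 1) w) :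
    ∃ v p, IsTreeRep n v ∧ 1 ≤ p ∧ p ≤ 2 * n - 1 ∧ F n (v, p) = w := by
  set m := n + 1 with hm_def
  have hlenw : w.length = 2 * n + 2 := by rw [hw.1]; omega
  have hne : w ≠ [] := by intro h; rw [h] at hlenw; simp at hlenw
  have hlast : w.getLast hne = m := getLast_isTreeRep (by omega) hw hne
  have hu : w.dropLast ++ [m] = w := by
    conv_rhs => rw [← List.dropLast_append_getLast hne, hlast]
  set u := w.dropLast with hu_def
  have hul : u.length = 2 * n + 1 := by rw [hu_def, List.length_dropLast, hlenw]; omega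
  have hcw := hw.2.2.1
  have hcm : List.count m w = 2 := hcw m (by omega) le_rfl
  have hcum : List.count m u = 1 := by
    have h5 : List.count m u + List.count m [m] = 2 := by
      rw [← List.count_append, hu]; exact hcm
    simp at h5
    omega
  have hmu : m ∈ u := List.count_pos_iff.1 (by omega)
  set p := List.idxOf m u with hp_def
  have hplt : p < u.length := List.idxOf_lt_length_iff.2 hmu
  have hup : u[p]'hplt = m := List.getElem_idxOf hplt
  have hhead := hw.2.2.2.1
  have hp1 : 1 ≤ p := by
    by_contra hcon
    have hp0 : p = 0 := by omega
    simp only [hp0] at hup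
    have h0 : w.getD 0 0 = m := by
      rw [← hu, List.getD_append _ _ _ 0 (by omega),
        List.getD_eq_getElem _ _ (by omega : 0 < u.length)]
      exact hup
    rw [hhead] at h0
    omega
  have hfwm : firstOcc w m = p := by rw [← hu, firstOcc_append_left hmu]; exact hp_def.symm
  have hswm : secondOcc w m = 2 * n + 1 := by rw [← hu, secondOcc_concat_self, hul]
  have hfsm := hw.2.2.2.2.1 m (by omega) le_rfl
  have hssm := hw.2.2.2.2.2 m (by omega) le_rfl
  have hm1 : m - 1 = n := by omega
  rw [hm1] at hfsm hssm
  have hp2 : p ≤ 2 * n - 1 := by omega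
  set A := u.take p with hA_def
  set B := u.drop (p + 1) with hB_def
  have hu2 : A ++ ([m] ++ B) = u := by
    have hd : u.drop p = m :: B := by rw [List.drop_eq_getElem_cons hplt, hup]
    rw [List.singleton_append, ← hd, hA_def, List.take_append_drop]
  have hAl : A.length = p := by rw [hA_def, List.length_take]; omega
  have hBl : B.length = 2 * n - p := by rw [hB_def, List.length_drop]; omega
  have hcAB : List.count m A = 0 ∧ List.count m B = 0 := by
    have h5 : List.count m u = List.count m A + (List.count m [m] + List.count m B) := by
      rw [← hu2]; simp [List.count_append]; omega
    simp at h5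
    omega
  have hmA : m ∉ A := List.count_eq_zero.1 hcAB.1
  have hmB : m ∉ B := List.count_eq_zero.1 hcAB.2
  have ht : (A ++ B).take p = A := List.take_left' hAl
  have hd : (A ++ B).drop p = B := List.drop_left' hAl
  have hbig : A ++ ([m] ++ (B ++ [m])) = w := by
    rw [← hu, ← hu2]
    simp [List.append_assoc]
  have hFw : F n (A ++ B, p) = w := by
    show (A ++ B).take p ++ ([m] ++ ((A ++ B).drop p ++ [m])) = w
    rw [ht, hd, hbig]
  have hcv : ∀ i, 1 ≤ i → i ≤ n → List.count i (A ++ B) = 2 := by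
    intro i h1 h2
    have hiw := hcw i h1 (by omega)
    rw [← hu, ← hu2] at hiw
    have hz : List.count i [m] = 0 := List.count_eq_zero.2 (by simp; omega)
    simp only [List.count_append, hz] at hiw ⊢
    omega
  have hin : ∀ j, 1 ≤ j → j ≤ n → j ∈ A ++ B := by
    intro j hj1 hj2
    exact List.count_pos_iff.1 (by rw [hcv j hj1 hj2]; omega)
  refine ⟨A ++ B, p, ⟨?_, ?_, hcv, ?_, ?_, ?_⟩, hp1, hp2, hFw⟩
  · simp only [List.length_append, hAl, hBl]
    omega
  · intro x hx
    have hxw : x ∈ w := by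
      rw [← hu, ← hu2]
      simp only [List.mem_append] at hx ⊢
      tauto
    have hbd := hw.2.1 x hxw
    have hxm : x ≠ m := by
      rintro rfl
      simp only [List.mem_append] at hx
      tauto
    omega
  · have h0A : 0 < A.length := by omega
    have h0u : 0 < u.length := by omega
    have hA0 : A[0]'h0A = u[0]'h0u := List.getElem_take
    rw [List.getD_append _ _ _ 0 h0A, List.getD_eq_getElem _ _ h0A, hA0,
      ← List.getD_eq_getElem u 0 h0u]
    have h6 : w.getD 0 0 = u.getD 0 0 := by
      rw [← hu, List.getD_append _ _ _ 0 h0u]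
    rw [← h6]
    exact hhead
  · intro i h1 h2
    have hwf := hw.2.2.2.2.1 i h1 (by omega)
    have hfi := firstOcc_shift (B := B) (m := m) (hin i (by omega) h2) (by omega)
    have hsi := secondOcc_shift (B := B) (m := m) (hin (i - 1) (by omega) (by omega)) (by omega)
    rw [hbig] at hfi hsi
    rcases hfi with ⟨hlt1, heq1⟩ | ⟨hge1, heq1⟩ <;>
      rcases hsi with ⟨hlt2, heq2⟩ | ⟨hge2, heq2⟩ <;> omega
  · intro i h1 h2
    have hws := hw.2.2.2.2.2 i h1 (by omega)
    have hsi := secondOcc_shift (B := B) (m := m) (hin i (by omega) h2) (by omega)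
    have hsi' := secondOcc_shift (B := B) (m := m) (hin (i - 1) (by omega) (by omega)) (by omega)
    rw [hbig] at hsi hsi'
    rcases hsi with ⟨hlt1, heq1⟩ | ⟨hge1, heq1⟩ <;>
      rcases hsi' with ⟨hlt2, heq2⟩ | ⟨hge2, heq2⟩ <;> omega

lemma F_inj {n : ℕ} {v v' : List ℕ} {p p' : ℕ}
    (hm : n + 1 ∉ v) (hm' : n + 1 ∉ v') (hp : p ≤ v.length) (hp' : p' ≤ v'.length)
    (h : F n (v, p) = F n (v', p')) : v = v' ∧ p = p' := by
  have key : ∀ (x : List ℕ) (q : ℕ), n + 1 ∉ x → q ≤ x.length →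
      firstOcc (F n (x, q)) (n + 1) = q := by
    intro x q hmx hq
    have hmA : n + 1 ∉ x.take q := fun hh => hmx (List.mem_of_mem_take hh)
    show firstOcc (x.take q ++ ([n + 1] ++ (x.drop q ++ [n + 1]))) (n + 1) = q
    rw [firstOcc_append_right hmA]
    have h0 : firstOcc ([n + 1] ++ (x.drop q ++ [n + 1])) (n + 1) = 0 :=
      List.idxOf_cons_self
    rw [h0, List.length_take]
    omega
  have hpp : p = p' := by rw [← key v p hm hp, ← key v' p' hm' hp', h]
  subst hpp
  refine ⟨?_, rfl⟩
  have h' : v.take p ++ ([n + 1] ++ (v.drop p ++ [n + 1]))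
      = v'.take p ++ ([n + 1] ++ (v'.drop p ++ [n + 1])) := h
  have h2 := List.append_inj h' (by rw [List.length_take, List.length_take]; omega)
  obtain ⟨hA, hR⟩ := h2
  simp only [List.singleton_append, List.cons.injEq, true_and] at hR
  rw [List.append_left_inj] at hR
  rw [← List.take_append_drop p v, ← List.take_append_drop p v', hA, hR]

lemma step_count (n : ℕ) (hn : 1 ≤ n) :
    {w : List ℕ | IsTreeRep (n + 1) w}.ncard
      = {v : List ℕ | IsTreeRep n v}.ncard * (2 * n - 1) := by
  have hmnot : ∀ {v : List ℕ}, IsTreeRep n v → n + 1 ∉ v := by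
    intro v hv h
    have := hv.2.1 _ h
    omega
  have hbij : Set.BijOn (F n) ({v : List ℕ | IsTreeRep n v} ×ˢ Set.Icc 1 (2 * n - 1))
      {w : List ℕ | IsTreeRep (n + 1) w} := by
    refine ⟨?_, ?_, ?_⟩
    · rintro ⟨v, p⟩ ⟨hv, hp⟩
      exact isTreeRep_F hn hv hp.1 hp.2
    · rintro ⟨v, p⟩ ⟨hv, hp⟩ ⟨v', p'⟩ ⟨hv', hp'⟩ h
      simp only [Set.mem_setOf_eq, Set.mem_Icc] at hv hp hv' hp'
      obtain ⟨h1, h2⟩ := F_inj (hmnot hv) (hmnot hv')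
        (by rw [hv.1]; omega) (by rw [hv'.1]; omega) h
      rw [Prod.mk.injEq]
      exact ⟨h1, h2⟩
    · intro w hw
      obtain ⟨v, p, hv, hp1, hp2, hF⟩ := exists_pre hn hw
      exact ⟨(v, p), ⟨hv, hp1, hp2⟩, hF⟩
  rw [← hbij.image_eq, Set.ncard_image_of_injOn hbij.injOn]
  rw [← Nat.card_coe_set_eq, Nat.card_congr (Equiv.Set.prod _ _), Nat.card_prod,
    Nat.card_coe_set_eq, Nat.card_coe_set_eq]
  congr 1
  rw [← Finset.coe_Icc, Set.ncard_coe_finset, Nat.card_Icc]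
  omega

lemma base_case : {v : List ℕ | IsTreeRep 1 v} = {[1, 1]} := by
  ext v
  simp only [Set.mem_setOf_eq, Set.mem_singleton_iff]
  constructor
  · rintro ⟨hlen, hmem, hcount, hhead, h5, h6⟩
    have hl2 : v.length = 2 := by omega
    obtain ⟨a, b, rfl⟩ := List.length_eq_two.1 hl2
    have ha := hmem a (by simp)
    have hb := hmem b (by simp)
    have ha1 : a = 1 := by omega
    have hb1 : b = 1 := by omega
    rw [ha1, hb1]
  · rintro rfl
    refine ⟨rfl, ?_, ?_, rfl, ?_, ?_⟩
    · intro x hx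
      simp at hx
      omega
    · intro i h1 h2
      have hi : i = 1 := by omega
      subst hi
      rfl
    · intro i h1 h2; omega
    · intro i h1 h2; omega

lemma main_count : ∀ n, 1 ≤ n →
    {v : List ℕ | IsTreeRep n v}.ncard = ∏ k ∈ Finset.Icc 2 n, (2 * k - 3) := by
  intro n hn
  induction n, hn using Nat.le_induction with
  | base =>
    rw [base_case, Set.ncard_singleton, Finset.Icc_eq_empty (by omega), Finset.prod_empty]
  | succ n hn ih =>
    have h37 : 2 * (n + 1) - 3 = 2 * n - 1 := by omega
    rw [step_count n hn, ih, Finset.prod_Icc_succ_top (by omega) fun k => 2 * k - 3, h37]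

/-- For every `n ≥ 1`, the number of tree representations on `{1,…,n}` equals
`∏_{k=2}^{n} (2k−3)` (the double factorial `(2n−3)!!`, the empty product being `1`);
in particular there are `15` tree representations on `{1,2,3,4}`. -/
theorem stmt0 (n : ℕ) (hn : 1 ≤ n) :
    {v : List ℕ | IsTreeRep n v}.ncard = ∏ k ∈ Finset.Icc 2 n, (2 * k - 3) ∧
    {v : List ℕ | IsTreeRep 4 v}.ncard = 15 := by
  refine ⟨main_count n hn, ?_⟩
  rw [main_count 4 (by norm_num)]
  decide
end

section
/- Let n ≥ 2 and let v be a tree representation on {1,…,n}. Then the sequence of length 2n−2 obtained from v by deleting both occurrences of n is a tree representation on {1,…,n−1}. -/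
lemma filt_indexOf (P : ℕ → Bool) (x : ℕ) (hx : P x = true) :
    ∀ l : List ℕ, x ∈ l →
      (l.filter P).idxOf x = ((l.take (l.idxOf x)).filter P).length := by
  intro l hl
  induction l with
  | nil => simp at hl
  | cons a t ih =>
    by_cases h : a = x
    · subst h
      simp [List.idxOf_cons_self, hx]
    · have hxt : x ∈ t := by
        rcases List.mem_cons.mp hl with h' | h'
        · exact absurd h'.symm h
        · exact h'
      rw [List.idxOf_cons_ne _ h]
      by_cases hPa : P a = true
      · rw [List.filter_cons_of_pos hPa, List.idxOf_cons_ne _ h]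
        simp only [Nat.succ_eq_add_one, List.take_succ_cons,
          List.filter_cons_of_pos hPa, List.length_cons]
        rw [ih hxt]
      · rw [List.filter_cons_of_neg hPa]
        simp only [Nat.succ_eq_add_one, List.take_succ_cons,
          List.filter_cons_of_neg hPa]
        exact ih hxt

lemma filt_take_mono (P : ℕ → Bool) (l : List ℕ) {p q : ℕ} (hp : p < l.length)
    (hpq : p < q) (hP : P l[p] = true) :
    ((l.take p).filter P).length < ((l.take q).filter P).length := by
  have h1 : l.take (p + 1) = l.take p ++ [l[p]] := by
    rw [List.take_succ, List.getElem?_eq_getElem hp]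
    rfl
  have h2 : ((l.take (p + 1)).filter P).length = ((l.take p).filter P).length + 1 := by
    rw [h1, List.filter_append, List.length_append, List.filter_cons_of_pos hP]
    simp
  have h3 : l.take (p + 1) <+: l.take q := by
    have := List.take_prefix (p + 1) (l.take q)
    rwa [List.take_take, min_eq_left (by omega)] at this
  have h4 := (List.IsPrefix.filter P h3).length_le
  omega

lemma filt_split (P : ℕ → Bool) (l : List ℕ) {p : ℕ} (hp : p < l.length)
    (hP : P l[p] = true) :
    (l.filter P).length =
      ((l.take p).filter P).length + 1 + ((l.drop (p + 1)).filter P).length := by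
  conv_lhs => rw [← List.take_append_drop p l, List.drop_eq_getElem_cons hp]
  rw [List.filter_append, List.filter_cons_of_pos hP]
  simp; omega

lemma secondOcc_pos_lt (l : List ℕ) (x : ℕ) (hl : x ∈ l) :
    secondOcc l x < l.length ∧ l[secondOcc l x]'(by
      have : 0 < l.length := List.length_pos_iff.mpr (List.ne_nil_of_mem hl)
      unfold secondOcc; omega) = x := by
  have hr : l.reverse.idxOf x < l.reverse.length := by
    rw [List.idxOf_lt_length_iff]; simpa using hl
  have hL : 0 < l.length := List.length_pos_iff.mpr (List.ne_nil_of_mem hl)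
  have hget := List.getElem_idxOf hr
  rw [List.getElem_reverse] at hget
  constructor
  · unfold secondOcc; omega
  · exact hget

lemma firstOcc_filter (P : ℕ → Bool) (x : ℕ) (hx : P x = true) (l : List ℕ)
    (hl : x ∈ l) :
    firstOcc (l.filter P) x = ((l.take (firstOcc l x)).filter P).length :=
  filt_indexOf P x hx l hl

lemma secondOcc_filter (P : ℕ → Bool) (x : ℕ) (hx : P x = true) (l : List ℕ)
    (hl : x ∈ l) :
    secondOcc (l.filter P) x = ((l.take (secondOcc l x)).filter P).length := by
  have hL : 0 < l.length := List.length_pos_iff.mpr (List.ne_nil_of_mem hl)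
  have hrlt : l.reverse.idxOf x < l.length := by
    have := List.idxOf_lt_length_iff.mpr (show x ∈ l.reverse by simpa using hl)
    simpa using this
  obtain ⟨hqlt, hqget⟩ := secondOcc_pos_lt l x hl
  have hPq : P (l[secondOcc l x]'hqlt) = true := by
    rw [show (l[secondOcc l x]'hqlt) = x from hqget]; exact hx
  have hsplit := filt_split P l hqlt hPq
  have hrev : (l.filter P).reverse.idxOf x =
      ((l.reverse.take (l.reverse.idxOf x)).filter P).length := by
    rw [← List.filter_reverse]
    exact filt_indexOf P x hx l.reverse (by simpa using hl)
  have htake : l.reverse.take (l.reverse.idxOf x) =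
      (l.drop (l.length - l.reverse.idxOf x)).reverse := by
    have h := @List.reverse_take ℕ l.reverse (l.reverse.idxOf x)
    rw [List.reverse_reverse] at h
    rw [← List.reverse_reverse (l.reverse.take (l.reverse.idxOf x)), h]
    simp
  have hdropq : l.length - l.reverse.idxOf x = secondOcc l x + 1 := by
    unfold secondOcc; omega
  have hfin : secondOcc (l.filter P) x =
      (l.filter P).length - 1 - ((l.drop (secondOcc l x + 1)).filter P).length := by
    show (l.filter P).length - 1 - (l.filter P).reverse.idxOf x = _
    rw [hrev, htake, hdropq, List.filter_reverse, List.length_reverse]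
  rw [hfin]
  omega

/-- For `n ≥ 2`, deleting both occurrences of `n` from a tree representation on
`{1,…,n}` yields a sequence of length `2n−2` that is a tree representation on
`{1,…,n−1}`. -/
theorem stmt1 (n : ℕ) (hn : 2 ≤ n) (v : List ℕ) (hv : IsTreeRep n v) :
    (v.filter fun x => x ≠ n).length = 2 * n - 2 ∧
    IsTreeRep (n - 1) (v.filter fun x => x ≠ n) := by
  obtain ⟨hlen, hrange, hcount, hhead, h5, h6⟩ := hv
  set P : ℕ → Bool := fun x => decide (x ≠ n) with hP
  have hmem : ∀ i, 1 ≤ i → i ≤ n → i ∈ v := by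
    intro i h1 h2
    rw [← List.count_pos_iff, hcount i h1 h2]; omega
  have hPle : ∀ i, i ≤ n - 1 → P i = true := by
    intro i hi; simp only [hP, decide_eq_true_eq]; omega
  -- length
  have hlenw : (v.filter P).length = 2 * n - 2 := by
    have h1 := List.length_eq_countP_add_countP P (l := v)
    have h2 : v.countP (fun a => decide ¬(P a = true)) = v.count n := by
      rw [List.count_eq_countP]
      apply List.countP_congr
      intro a _
      simp [hP]
    have h3 : v.count n = 2 := hcount n (by omega) le_rfl
    have h4 : v.countP P = (v.filter P).length := List.countP_eq_length_filter (p := P) (l := v)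
    omega
  refine ⟨hlenw, ?_, ?_, ?_, ?_, ?_, ?_⟩
  · rw [hlenw]; omega
  · intro x hx
    obtain ⟨hxv, hxP⟩ := List.mem_filter.mp hx
    have h1 := hrange x hxv
    have h2 : x ≠ n := by simpa [hP] using hxP
    omega
  · intro i h1 h2
    rw [List.count_filter (hPle i h2)]
    exact hcount i h1 (by omega)
  · cases v with
    | nil => simp at hlen; omega
    | cons a t =>
      have ha : a = 1 := by simpa using hhead
      subst ha
      rw [List.filter_cons_of_pos (hPle 1 (by omega))]
      simp
  · intro i h2i hin
    have hiP : P i = true := hPle i hin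
    have hi1P : P (i - 1) = true := hPle (i - 1) (by omega)
    have hiv : i ∈ v := hmem i (by omega) (by omega)
    have hi1v : (i - 1) ∈ v := hmem (i - 1) (by omega) (by omega)
    rw [firstOcc_filter P i hiP v hiv, secondOcc_filter P (i - 1) hi1P v hi1v]
    have hp : firstOcc v i < v.length := List.idxOf_lt_length_iff.mpr hiv
    have hget : v[firstOcc v i]'hp = i := List.getElem_idxOf hp
    exact filt_take_mono P v hp (h5 i h2i (by omega))
      (by rw [show (v[firstOcc v i]'hp) = i from hget]; exact hiP)
  · intro i h2i hin
    have hiP : P i = true := hPle i hin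
    have hi1P : P (i - 1) = true := hPle (i - 1) (by omega)
    have hiv : i ∈ v := hmem i (by omega) (by omega)
    have hi1v : (i - 1) ∈ v := hmem (i - 1) (by omega) (by omega)
    rw [secondOcc_filter P i hiP v hiv, secondOcc_filter P (i - 1) hi1P v hi1v]
    obtain ⟨hp, hget⟩ := secondOcc_pos_lt v (i - 1) hi1v
    exact filt_take_mono P v hp (h6 i h2i (by omega))
      (by rw [show (v[secondOcc v (i - 1)]'hp) = i - 1 from hget]; exact hi1P)
end

section
/- Let v be a tree representation on {1,…,n} and let v′ be obtained from v by a single HOP. Then v′ is again a tree representation on {1,…,n}. -/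
namespace HopAux
open List

lemma ins_lt : ∀ (l : List ℕ) (k a x : ℕ), x ∈ l → l.idxOf x < k →
    (l.insertIdx k a).idxOf x = l.idxOf x
  | [], _, _, _, hx, _ => absurd hx (List.not_mem_nil)
  | b :: t, k, a, x, hx, hlt => by
    cases k with
    | zero => omega
    | succ k =>
      rw [List.insertIdx_succ_cons]
      by_cases hbx : b = x
      · simp [hbx, List.idxOf_cons_self]
      · rw [List.idxOf_cons_ne _ hbx] at hlt ⊢
        rw [List.idxOf_cons_ne _ hbx]
        have hxt : x ∈ t := by rcases List.mem_cons.1 hx with h | h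
                               · exact absurd h.symm hbx
                               · exact h
        rw [ins_lt t k a x hxt (by omega)]

lemma ins_ge : ∀ (l : List ℕ) (k a x : ℕ), x ∈ l → x ≠ a → k ≤ l.idxOf x →
    (l.insertIdx k a).idxOf x = l.idxOf x + 1
  | l, 0, a, x, _, hxa, _ => by
    rw [List.insertIdx_zero, List.idxOf_cons_ne _ (Ne.symm hxa)]
  | [], k+1, _, _, hx, _, _ => absurd hx (List.not_mem_nil)
  | b :: t, k+1, a, x, hx, hxa, hle => by
    rw [List.insertIdx_succ_cons]
    by_cases hbx : b = x
    · rw [List.idxOf_cons_eq _ hbx] at hle; omega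
    · rw [List.idxOf_cons_ne _ hbx] at hle ⊢
      rw [List.idxOf_cons_ne _ hbx]
      have hxt : x ∈ t := by rcases List.mem_cons.1 hx with h | h
                             · exact absurd h.symm hbx
                             · exact h
      rw [ins_ge t k a x hxt hxa (by omega)]

lemma ins_self : ∀ (l : List ℕ) (k a : ℕ), k ≤ l.length → k ≤ l.idxOf a →
    (l.insertIdx k a).idxOf a = k
  | l, 0, a, _, _ => by rw [List.insertIdx_zero, List.idxOf_cons_self]
  | [], k+1, _, hk, _ => by simp at hk
  | b :: t, k+1, a, hk, hle => by
    rw [List.insertIdx_succ_cons]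
    by_cases hba : b = a
    · rw [List.idxOf_cons_eq _ hba] at hle; omega
    · rw [List.idxOf_cons_ne _ hba] at hle ⊢
      rw [ins_self t k a (by simpa using hk) (by omega)]

lemma erase_lt : ∀ (l : List ℕ) (q x : ℕ), x ∈ l → l.idxOf x < q →
    (l.eraseIdx q).idxOf x = l.idxOf x
  | [], _, _, hx, _ => absurd hx (List.not_mem_nil)
  | b :: t, q, x, hx, hlt => by
    cases q with
    | zero => omega
    | succ q =>
      rw [List.eraseIdx_cons_succ]
      by_cases hbx : b = x
      · simp [hbx, List.idxOf_cons_self]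
      · rw [List.idxOf_cons_ne _ hbx] at hlt ⊢
        rw [List.idxOf_cons_ne _ hbx]
        have hxt : x ∈ t := by rcases List.mem_cons.1 hx with h | h
                               · exact absurd h.symm hbx
                               · exact h
        rw [erase_lt t q x hxt (by omega)]

lemma erase_gt : ∀ (l : List ℕ) (q x : ℕ), x ∈ l → q < l.idxOf x →
    (l.eraseIdx q).idxOf x = l.idxOf x - 1
  | [], _, _, hx, _ => absurd hx (List.not_mem_nil)
  | b :: t, q, x, hx, hgt => by
    have hbx : b ≠ x := by
      intro h; rw [List.idxOf_cons_eq _ h] at hgt; omega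
    have hxt : x ∈ t := by rcases List.mem_cons.1 hx with h | h
                           · exact absurd h.symm hbx
                           · exact h
    cases q with
    | zero =>
      rw [List.eraseIdx_cons_zero, List.idxOf_cons_ne _ hbx]; omega
    | succ q =>
      rw [List.eraseIdx_cons_succ, List.idxOf_cons_ne _ hbx,
        List.idxOf_cons_ne _ hbx]
      rw [List.idxOf_cons_ne _ hbx] at hgt
      have hq : q < t.idxOf x := by omega
      rw [erase_gt t q x hxt hq]
      omega

lemma insertIdx_eq : ∀ (l : List ℕ) (k a : ℕ), k ≤ l.length →
    l.insertIdx k a = l.take k ++ a :: l.drop k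
  | _, 0, _, _ => by simp
  | [], k+1, a, h => by simp at h
  | b :: t, k+1, a, h => by
    rw [List.insertIdx_succ_cons, insertIdx_eq t k a (by simpa using h)]
    simp

lemma reverse_insertIdx (l : List ℕ) (k a : ℕ) (hk : k ≤ l.length) :
    (l.insertIdx k a).reverse = l.reverse.insertIdx (l.length - k) a := by
  rw [insertIdx_eq l k a hk,
    insertIdx_eq l.reverse (l.length - k) a (by rw [List.length_reverse]; omega)]
  rw [List.reverse_append, List.reverse_cons, List.take_reverse, List.drop_reverse]
  have h1 : l.length - (l.length - k) = k := by omega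
  rw [h1]
  simp

lemma reverse_eraseIdx (l : List ℕ) (q : ℕ) (hq : q < l.length) :
    (l.eraseIdx q).reverse = l.reverse.eraseIdx (l.length - 1 - q) := by
  rw [List.eraseIdx_eq_take_drop_succ, List.eraseIdx_eq_take_drop_succ,
    List.reverse_append, List.take_reverse, List.drop_reverse]
  have h1 : l.length - (l.length - 1 - q) = q + 1 := by omega
  have h2 : l.length - (l.length - 1 - q + 1) = q := by omega
  rw [h1, h2]

lemma rev_idxOf_count_one : ∀ (l : List ℕ) (x : ℕ), l.count x = 1 →
    l.reverse.idxOf x = l.length - 1 - l.idxOf x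
  | [], x, h => by simp at h
  | b :: t, x, h => by
    rw [List.reverse_cons]
    by_cases hbx : b = x
    · subst hbx
      have ht : t.count b = 0 := by
        have := List.count_cons_self (a := b) (l := t); omega
      have hnt : b ∉ t := List.count_eq_zero.1 ht
      have hnt' : b ∉ t.reverse := by simpa using hnt
      rw [List.idxOf_append_of_notMem hnt', List.idxOf_cons_self]
      simp [List.idxOf_cons_self]
    · have hct : t.count x = 1 := by
        rw [List.count_cons_of_ne hbx] at h; exact h
      have hxt : x ∈ t := by
        by_contra hx; rw [List.count_eq_zero_of_not_mem hx] at hct; omega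
      have hxr : x ∈ t.reverse := by simpa using hxt
      have hidx : t.idxOf x < t.length := List.idxOf_lt_length_iff.2 hxt
      rw [List.idxOf_append_of_mem hxr, rev_idxOf_count_one t x hct,
        List.idxOf_cons_ne _ hbx]
      simp only [List.length_cons]
      omega

lemma count_two_idxOf : ∀ (l : List ℕ) (x : ℕ), l.count x = 2 →
    l.idxOf x + l.reverse.idxOf x + 2 ≤ l.length
  | [], x, h => by simp at h
  | b :: t, x, h => by
    rw [List.reverse_cons]
    by_cases hbx : b = x
    · subst hbx
      have ht : t.count b = 1 := by
        have := List.count_cons_self (a := b) (l := t); omega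
      have hxt : b ∈ t := by
        by_contra hx; rw [List.count_eq_zero_of_not_mem hx] at ht; omega
      have hxr : b ∈ t.reverse := by simpa using hxt
      have hidx : t.idxOf b < t.length := List.idxOf_lt_length_iff.2 hxt
      rw [List.idxOf_append_of_mem hxr, List.idxOf_cons_self,
        rev_idxOf_count_one t b ht]
      simp only [List.length_cons]
      omega
    · have hct : t.count x = 2 := by
        rw [List.count_cons_of_ne hbx] at h; exact h
      have hxt : x ∈ t := by
        by_contra hx; rw [List.count_eq_zero_of_not_mem hx] at hct; omega
      have hxr : x ∈ t.reverse := by simpa using hxt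
      have := count_two_idxOf t x hct
      rw [List.idxOf_append_of_mem hxr, List.idxOf_cons_ne _ hbx]
      simp only [List.length_cons]
      omega

end HopAux

/-- A single HOP: for some `i ∈ {2,…,n}`, remove the first occurrence of `i`
from `v` and reinsert it at a (0-indexed) position `k` strictly after the first
entry (`1 ≤ k`) and weakly before the (resulting position of the) second
occurrence of `i-1`. -/
def IsHop (n : ℕ) (v v' : List ℕ) : Prop :=
  ∃ i k, 2 ≤ i ∧ i ≤ n ∧ 1 ≤ k ∧ k ≤ secondOcc (v.erase i) (i - 1) ∧
    v' = (v.erase i).insertIdx k i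

/-- A single HOP applied to a tree representation on `{1,…,n}` yields again a
tree representation on `{1,…,n}`. -/
theorem stmt6 (n : ℕ) (v v' : List ℕ) (hv : IsTreeRep n v) (h : IsHop n v v') :
    IsTreeRep n v' := by
  obtain ⟨i, k, hi2, hin, hk1, hk2, rfl⟩ := h
  obtain ⟨hlen, hmem, hcount, hhead, h5, h6⟩ := hv
  have hn2 : 2 ≤ n := le_trans hi2 hin
  have hL4 : 4 ≤ v.length := by omega
  set w := v.erase i with hwdef
  have hmemv : ∀ x, 1 ≤ x → x ≤ n → x ∈ v := by
    intro x h1 h2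
    by_contra hx
    have := hcount x h1 h2
    rw [List.count_eq_zero_of_not_mem hx] at this; omega
  have hiv : i ∈ v := hmemv i (by omega) hin
  have hp : v.idxOf i < v.length := List.idxOf_lt_length_iff.2 hiv
  have hB : ∀ x, 1 ≤ x → x ≤ n →
      v.idxOf x < v.length ∧ v.reverse.idxOf x < v.length ∧
      v.idxOf x + v.reverse.idxOf x + 2 ≤ v.length := by
    intro x h1 h2
    have hxv := hmemv x h1 h2
    refine ⟨List.idxOf_lt_length_iff.2 hxv, ?_,
      HopAux.count_two_idxOf v x (hcount x h1 h2)⟩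
    have hxr : x ∈ v.reverse := by simpa using hxv
    have := List.idxOf_lt_length_iff.2 hxr
    simpa using this
  have hw : w = v.eraseIdx (v.idxOf i) := (List.erase_eq_eraseIdx_of_idxOf rfl)
  have hwlen : w.length = v.length - 1 := by
    rw [hwdef]; exact List.length_erase_of_mem hiv
  have hwrev : w.reverse = v.reverse.eraseIdx (v.length - 1 - v.idxOf i) := by
    rw [hw, HopAux.reverse_eraseIdx v _ hp]
  have hcw : ∀ x, x ≠ i → w.count x = v.count x := fun x hx =>
    List.count_erase_of_ne hx
  have hcwi : w.count i = 1 := by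
    rw [hwdef, List.count_erase_self, hcount i (by omega) hin]
  have hiw : i ∈ w := by
    by_contra hx; rw [List.count_eq_zero_of_not_mem hx] at hcwi; omega
  have hmemw : ∀ x, 1 ≤ x → x ≤ n → x ≠ i → x ∈ w := by
    intro x h1 h2 hxi
    by_contra hx
    have h3 := hcw x hxi
    rw [List.count_eq_zero_of_not_mem hx, hcount x h1 h2] at h3; omega
  have hwb : ∀ j, 1 ≤ j → j ≤ n → w.reverse.idxOf j < w.length := by
    intro j h1 h2
    have hjw : j ∈ w := by
      by_cases hji : j = i
      · exact hji ▸ hiw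
      · exact hmemw j h1 h2 hji
    have hjr : j ∈ w.reverse := by simpa using hjw
    have := List.idxOf_lt_length_iff.2 hjr
    simpa using this
  have hfne : ∀ j, j ∈ v → j ≠ i → v.idxOf j ≠ v.idxOf i := by
    intro j hjv hji heq
    apply hji
    have h1 := List.getElem_idxOf (List.idxOf_lt_length_iff.2 hjv)
    have h2 := List.getElem_idxOf hp
    rw [← h1, ← h2]
    congr 1
  have hrne : ∀ j, j ∈ v → j ≠ i →
      v.reverse.idxOf j ≠ v.length - 1 - v.idxOf i := by
    intro j hjv hji heq
    apply hji
    have hjr : j ∈ v.reverse := by simpa using hjv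
    have h1 := List.getElem_idxOf (List.idxOf_lt_length_iff.2 hjr)
    have h2 := List.getElem_idxOf hp
    rw [List.getElem_reverse] at h1
    rw [← h1, ← h2]
    congr 1
    omega
  have Hrw : ∀ j, 1 ≤ j → j ≤ n →
      w.reverse.idxOf j =
        (if v.reverse.idxOf j < v.length - 1 - v.idxOf i then v.reverse.idxOf j
         else v.reverse.idxOf j - 1) ∧
      v.reverse.idxOf j ≠ v.length - 1 - v.idxOf i := by
    intro j h1 h2
    have hjv := hmemv j h1 h2
    have hjr : j ∈ v.reverse := by simpa using hjv
    have hne : v.reverse.idxOf j ≠ v.length - 1 - v.idxOf i := by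
      by_cases hji : j = i
      · subst hji
        have h3 := (hB j h1 h2).2.2
        omega
      · exact hrne j hjv hji
    refine ⟨?_, hne⟩
    rw [hwrev]
    rcases lt_or_gt_of_ne hne with hlt | hgt
    · rw [HopAux.erase_lt v.reverse _ j hjr hlt, if_pos hlt]
    · rw [HopAux.erase_gt v.reverse _ j hjr hgt, if_neg (by omega)]
  have Hfw : ∀ j, 1 ≤ j → j ≤ n → j ≠ i →
      w.idxOf j =
        (if v.idxOf j < v.idxOf i then v.idxOf j else v.idxOf j - 1) ∧
      v.idxOf j ≠ v.idxOf i := by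
    intro j h1 h2 hji
    have hjv := hmemv j h1 h2
    have hne := hfne j hjv hji
    refine ⟨?_, hne⟩
    rw [hw]
    rcases lt_or_gt_of_ne hne with hlt | hgt
    · rw [HopAux.erase_lt v _ j hjv hlt, if_pos hlt]
    · rw [HopAux.erase_gt v _ j hjv hgt, if_neg (by omega)]
  have Hfwi : w.idxOf i = v.length - 2 - w.reverse.idxOf i := by
    have h9 := HopAux.rev_idxOf_count_one w i hcwi
    have hfi : w.idxOf i < w.length := List.idxOf_lt_length_iff.2 hiw
    omega
  have hk2' : k + w.reverse.idxOf (i - 1) ≤ v.length - 2 := by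
    have hb1 := hwb (i - 1) (by omega) (by omega)
    simp only [secondOcc] at hk2
    omega
  have hchain_i : w.reverse.idxOf i < w.reverse.idxOf (i - 1) := by
    have h6i := h6 i hi2 hin
    simp only [secondOcc] at h6i
    obtain ⟨e1, ne1⟩ := Hrw i (by omega) hin
    obtain ⟨e2, ne2⟩ := Hrw (i - 1) (by omega) (by omega)
    have hBi := hB i (by omega) hin
    have hB1 := hB (i - 1) (by omega) (by omega)
    split_ifs at e1 e2 <;> omega
  have hkw : k ≤ w.length := by omega
  have hkfwi : k ≤ w.idxOf i := by rw [Hfwi]; omega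
  have hv'len : (w.insertIdx k i).length = v.length := by
    rw [List.length_insertIdx_of_le_length hkw]; omega
  have hv'rev : (w.insertIdx k i).reverse = w.reverse.insertIdx (v.length - 1 - k) i := by
    rw [HopAux.reverse_insertIdx w k i hkw, hwlen]
  have Hf'i : (w.insertIdx k i).idxOf i = k := HopAux.ins_self w k i hkw hkfwi
  have Hf' : ∀ j, 1 ≤ j → j ≤ n → j ≠ i →
      (w.insertIdx k i).idxOf j =
        if w.idxOf j < k then w.idxOf j else w.idxOf j + 1 := by
    intro j h1 h2 hji
    have hjw := hmemw j h1 h2 hji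
    rcases Nat.lt_or_ge (w.idxOf j) k with hlt | hge
    · rw [HopAux.ins_lt w k i j hjw hlt, if_pos hlt]
    · rw [HopAux.ins_ge w k i j hjw hji hge, if_neg (by omega)]
  have Hr'i : (w.insertIdx k i).reverse.idxOf i = w.reverse.idxOf i := by
    rw [hv'rev]
    apply HopAux.ins_lt
    · simpa using hiw
    · omega
  have Hr' : ∀ j, 1 ≤ j → j ≤ n → j ≠ i →
      (w.insertIdx k i).reverse.idxOf j =
        if w.reverse.idxOf j < v.length - 1 - k then w.reverse.idxOf j
        else w.reverse.idxOf j + 1 := by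
    intro j h1 h2 hji
    have hjw : j ∈ w.reverse := by simpa using hmemw j h1 h2 hji
    rw [hv'rev]
    rcases Nat.lt_or_ge (w.reverse.idxOf j) (v.length - 1 - k) with hlt | hge
    · rw [HopAux.ins_lt _ _ i j hjw hlt, if_pos hlt]
    · rw [HopAux.ins_ge _ _ i j hjw hji hge, if_neg (by omega)]
  have hperm : (w.insertIdx k i).Perm (i :: w) := List.perm_insertIdx i w hkw
  refine ⟨?_, ?_, ?_, ?_, ?_, ?_⟩
  · rw [hv'len, hlen]
  · intro x hx
    have hx' := hperm.subset hx
    rcases List.mem_cons.1 hx' with rfl | hxw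
    · exact ⟨by omega, hin⟩
    · exact hmem x (List.mem_of_mem_erase hxw)
  · intro j h1 h2
    rw [hperm.count_eq]
    by_cases hji : j = i
    · subst hji
      rw [List.count_cons_self, hcwi]
    · rw [List.count_cons_of_ne (Ne.symm hji), hcw j hji, hcount j h1 h2]
  · have hvne : v ≠ [] := by
      intro hv0; rw [hv0] at hlen; simp at hlen; omega
    obtain ⟨a, t, hvat⟩ := List.exists_cons_of_ne_nil hvne
    have ha : a = 1 := by rw [hvat] at hhead; simpa using hhead
    subst ha
    rw [hwdef, hvat]
    have hei : ((1:ℕ) :: t).erase i = 1 :: t.erase i := by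
      rw [List.erase_cons]
      simp only [if_neg (show ¬ ((1:ℕ) == i) by simp; omega)]
    rw [hei]
    cases k with
    | zero => omega
    | succ k => rw [List.insertIdx_succ_cons]; rfl
  · intro m hm2 hmn
    simp only [firstOcc, secondOcc, hv'len]
    by_cases hmi : m = i
    · subst hmi
      rw [Hf'i, Hr' (m - 1) (by omega) (by omega) (by omega)]
      have hb1 := hwb (m - 1) (by omega) (by omega)
      split_ifs <;> omega
    · by_cases hmi1 : m - 1 = i
      · rw [Hf' m (by omega) hmn hmi, hmi1, Hr'i]
        obtain ⟨e1, ne1⟩ := Hfw m (by omega) hmn hmi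
        obtain ⟨e2, ne2⟩ := Hrw i (by omega) hin
        have hBi := hB i (by omega) hin
        have hBm := hB m (by omega) hmn
        have h5m := h5 m hm2 hmn
        simp only [firstOcc, secondOcc, hmi1] at h5m
        have hbi := hwb i (by omega) hin
        split_ifs at e1 e2 ⊢ <;> omega
      · rw [Hf' m (by omega) hmn hmi, Hr' (m - 1) (by omega) (by omega) hmi1]
        obtain ⟨e1, ne1⟩ := Hfw m (by omega) hmn hmi
        obtain ⟨e2, ne2⟩ := Hrw (m - 1) (by omega) (by omega)
        have hBm := hB m (by omega) hmn
        have hB1 := hB (m - 1) (by omega) (by omega)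
        have h5m := h5 m hm2 hmn
        simp only [firstOcc, secondOcc] at h5m
        have hb1 := hwb (m - 1) (by omega) (by omega)
        split_ifs at e1 e2 ⊢ <;> omega
  · intro m hm2 hmn
    simp only [secondOcc, hv'len]
    have h6m := h6 m hm2 hmn
    simp only [secondOcc] at h6m
    by_cases hmi : m = i
    · subst hmi
      rw [Hr'i, Hr' (m - 1) (by omega) (by omega) (by omega)]
      have hb1 := hwb (m - 1) (by omega) (by omega)
      have hbi := hwb m (by omega) hmn
      split_ifs <;> omega
    · by_cases hmi1 : m - 1 = i
      · rw [hmi1, Hr'i, Hr' m (by omega) hmn hmi]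
        obtain ⟨e1, ne1⟩ := Hrw i (by omega) hin
        obtain ⟨e2, ne2⟩ := Hrw m (by omega) hmn
        have hBi := hB i (by omega) hin
        have hBm := hB m (by omega) hmn
        have hbi := hwb i (by omega) hin
        have hbm := hwb m (by omega) hmn
        have hb1 := hwb (i - 1) (by omega) (by omega)
        rw [hmi1] at h6m
        split_ifs at e1 e2 ⊢ <;> omega
      · rw [Hr' m (by omega) hmn hmi, Hr' (m - 1) (by omega) (by omega) hmi1]
        obtain ⟨e1, ne1⟩ := Hrw m (by omega) hmn
        obtain ⟨e2, ne2⟩ := Hrw (m - 1) (by omega) (by omega)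
        have hBm := hB m (by omega) hmn
        have hB1 := hB (m - 1) (by omega) (by omega)
        have hbm := hwb m (by omega) hmn
        have hb1 := hwb (m - 1) (by omega) (by omega)
        split_ifs at e1 e2 ⊢ <;> omega
end

section
/- Let n ≥ 2. Every tree representation on {1,…,n} can be transformed by a finite sequence of HOPs into the caterpillar representation (1, 2, 1̄, 3, 2̄, 4, 3̄, …, n, (n−1)̄, n̄), i.e. the sequence (1,2,1,3,2,4,3,…,n,n−1,n). Consequently, for any two tree representations u and v on {1,…,n}, there is a finite sequence of HOPs transforming u into v; that is, the graph whose vertices are the tree representations on {1,…,n} and whose edges join pairs differing by a single HOP is connected. -/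
/-- `u` can be transformed into `v` by a sequence of exactly `m` HOPs. -/
def HopChain (n m : ℕ) (u v : List ℕ) : Prop :=
  ∃ f : ℕ → List ℕ, f 0 = u ∧ f m = v ∧ ∀ j < m, IsHop n (f j) (f (j + 1))

/-- The caterpillar representation `(1, 2, 1̄, 3, 2̄, 4, 3̄, …, n, (n−1)̄, n̄)`. -/
def caterpillar (n : ℕ) : List ℕ :=
  1 :: (((List.range' 2 (n - 1)).flatMap fun k => [k, k - 1]) ++ [n])

namespace MyAux
open List

theorem insertIdx_append_left (a : ℕ) : ∀ (p : ℕ) (l₁ l₂ : List ℕ), p ≤ l₁.length →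
    (l₁ ++ l₂).insertIdx p a = l₁.insertIdx p a ++ l₂
  | 0, l₁, l₂, _ => by simp [List.insertIdx_zero]
  | p+1, [], l₂, h => by simp at h
  | p+1, b :: t, l₂, h => by
    simp only [List.cons_append, List.insertIdx_succ_cons]
    rw [insertIdx_append_left a p t l₂ (Nat.le_of_succ_le_succ h)]

theorem indexOf_insertIdx_ne (a x : ℕ) (hx : x ≠ a) : ∀ (p : ℕ) (l : List ℕ),
    (l.insertIdx p a).idxOf x = l.idxOf x + (if p ≤ l.idxOf x then 1 else 0)
  | 0, l => by
    simp [List.insertIdx_zero, List.idxOf_cons_ne _ (Ne.symm hx)]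
  | p+1, [] => by simp [List.insertIdx_succ_nil]
  | p+1, b :: t => by
    rcases eq_or_ne b x with rfl | hbx
    · simp [List.insertIdx_succ_cons, List.idxOf_cons_self]
    · simp only [List.insertIdx_succ_cons, List.idxOf_cons_ne _ hbx]
      rw [indexOf_insertIdx_ne a x hx p t]
      have : (p + 1 ≤ Nat.succ (t.idxOf x)) = (p ≤ t.idxOf x) := by
        simp [Nat.succ_le_succ_iff]
      simp only [Nat.succ_eq_add_one]
      by_cases hp : p ≤ t.idxOf x
      · rw [if_pos hp, if_pos (by omega)]
      · rw [if_neg hp, if_neg (by omega)]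

theorem indexOf_insertIdx_self (a : ℕ) : ∀ (p : ℕ) (l : List ℕ), a ∉ l → p ≤ l.length →
    (l.insertIdx p a).idxOf a = p
  | 0, l, _, _ => by simp [List.insertIdx_zero]
  | p+1, [], _, h => by simp at h
  | p+1, b :: t, hm, h => by
    have hba : b ≠ a := fun h' => hm (h' ▸ List.mem_cons_self)
    simp only [List.insertIdx_succ_cons, List.idxOf_cons_ne _ hba]
    rw [indexOf_insertIdx_self a p t (fun h' => hm (List.mem_cons_of_mem _ h')) (Nat.le_of_succ_le_succ h)]

theorem count_insertIdx (a x : ℕ) : ∀ (p : ℕ) (l : List ℕ), p ≤ l.length →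
    (l.insertIdx p a).count x = l.count x + (if x = a then 1 else 0)
  | 0, l, _ => by
    simp only [List.insertIdx_zero, List.count_cons]
    by_cases hxa : x = a
    · simp [hxa]
    · simp [hxa, Ne.symm hxa]
  | p+1, [], h => by simp at h
  | p+1, b :: t, h => by
    simp only [List.insertIdx_succ_cons, List.count_cons]
    rw [count_insertIdx a x p t (Nat.le_of_succ_le_succ h)]
    by_cases hxa : x = a <;> by_cases hbx : b = x <;> simp [hxa, hbx] <;> try omega

theorem erase_insertIdx_indexOf (a : ℕ) : ∀ (l : List ℕ), a ∈ l →
    (l.erase a).insertIdx (l.idxOf a) a = l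
  | [], h => by simp at h
  | b :: t, h => by
    rcases eq_or_ne b a with rfl | hba
    · simp [List.insertIdx_zero]
    · rw [List.idxOf_cons_ne _ hba, List.erase_cons_tail]
      · simp only [Nat.succ_eq_add_one, List.insertIdx_succ_cons]
        have hat : a ∈ t := by
          rcases List.mem_cons.1 h with h' | h'
          · exact absurd h'.symm hba
          · exact h'
        rw [erase_insertIdx_indexOf a t hat]
      · simp [hba]

theorem reverse_insertIdx (a : ℕ) : ∀ (p : ℕ) (l : List ℕ), p ≤ l.length →
    (l.insertIdx p a).reverse = l.reverse.insertIdx (l.length - p) a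
  | 0, l, _ => by
    simp only [List.insertIdx_zero, List.reverse_cons, Nat.sub_zero]
    rw [← List.length_reverse, List.insertIdx_length_self]
  | p+1, [], h => by simp at h
  | p+1, b :: t, h => by
    simp only [List.insertIdx_succ_cons, List.reverse_cons]
    rw [reverse_insertIdx a p t (Nat.le_of_succ_le_succ h),
      insertIdx_append_left a _ _ _ (by simpa using Nat.sub_le t.length p)]
    simp [Nat.succ_sub_succ]

theorem secondOcc_insertIdx (a x : ℕ) (hx : x ≠ a) (p : ℕ) (l : List ℕ) (hp : p ≤ l.length)
    (hm : x ∈ l) :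
    secondOcc (l.insertIdx p a) x = secondOcc l x + (if p ≤ secondOcc l x then 1 else 0) := by
  have hq : l.reverse.idxOf x < l.length := by
    rw [← List.length_reverse]; exact List.idxOf_lt_length_iff.2 (by simpa using hm)
  unfold secondOcc
  rw [List.length_insertIdx_of_le_length hp, reverse_insertIdx a p l hp, indexOf_insertIdx_ne a x hx]
  set q := l.reverse.idxOf x with hqdef
  by_cases h1 : l.length - p ≤ q
  · rw [if_pos h1, if_neg (by omega)]; omega
  · rw [if_neg h1, if_pos (by omega)]; omega

theorem firstOcc_insertIdx (a x : ℕ) (hx : x ≠ a) (p : ℕ) (l : List ℕ) :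
    firstOcc (l.insertIdx p a) x = firstOcc l x + (if p ≤ firstOcc l x then 1 else 0) :=
  indexOf_insertIdx_ne a x hx p l

theorem secondOcc_append_single (l : List ℕ) (x y : ℕ) (hxy : x ≠ y) :
    secondOcc (l ++ [y]) x = secondOcc l x := by
  unfold secondOcc
  rw [List.reverse_append, List.length_append]
  simp only [List.reverse_singleton, List.singleton_append,
    List.idxOf_cons_ne _ (Ne.symm hxy), List.length_singleton, Nat.succ_eq_add_one]
  omega

theorem secondOcc_append_single_self (l : List ℕ) (x : ℕ) :
    secondOcc (l ++ [x]) x = l.length := by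
  unfold secondOcc
  rw [List.reverse_append, List.length_append]
  simp [List.idxOf_cons_self]

theorem firstOcc_append_of_mem (l l' : List ℕ) (x : ℕ) (h : x ∈ l) :
    firstOcc (l ++ l') x = firstOcc l x :=
  List.idxOf_append_of_mem h

theorem secondOcc_le (v : List ℕ) (x : ℕ) : secondOcc v x ≤ v.length - 1 := by
  unfold secondOcc; omega

theorem shift_lt_shift_iff (p a b : ℕ) :
    a + (if p ≤ a then 1 else 0) < b + (if p ≤ b then 1 else 0) ↔ a < b := by
  by_cases h1 : p ≤ a <;> by_cases h2 : p ≤ b <;> simp [h1, h2] <;> omega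


theorem transfer_first (u : List ℕ) (p x n : ℕ) (hp : p ≤ u.length) (hx : x ≠ n) (hxu : x ∈ u) :
    firstOcc ((u.insertIdx p n) ++ [n]) x = firstOcc u x + (if p ≤ firstOcc u x then 1 else 0) := by
  rw [firstOcc_append_of_mem _ _ _ ((List.mem_insertIdx hp).2 (Or.inr hxu)),
    firstOcc_insertIdx n x hx p u]

theorem transfer_second (u : List ℕ) (p x n : ℕ) (hp : p ≤ u.length) (hx : x ≠ n) (hxu : x ∈ u) :
    secondOcc ((u.insertIdx p n) ++ [n]) x = secondOcc u x + (if p ≤ secondOcc u x then 1 else 0) := by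
  rw [secondOcc_append_single _ _ _ hx, secondOcc_insertIdx n x hx p u hp hxu]

theorem count_v (u : List ℕ) (p x n : ℕ) (hp : p ≤ u.length) :
    ((u.insertIdx p n) ++ [n]).count x = u.count x + (if x = n then 2 else 0) := by
  rw [List.count_append, count_insertIdx n x p u hp]
  by_cases hxn : x = n <;> simp [hxn, List.count_singleton] <;> omega

theorem head_v (u : List ℕ) (p n : ℕ) (hp : 1 ≤ p) (hu : u ≠ []) :
    ((u.insertIdx p n) ++ [n]).getD 0 0 = u.getD 0 0 := by
  obtain ⟨c, t, rfl⟩ : ∃ c t, u = c :: t := by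
    cases u with
    | nil => exact absurd rfl hu
    | cons c t => exact ⟨c, t, rfl⟩
  obtain ⟨p', rfl⟩ : ∃ p', p = p' + 1 := ⟨p - 1, by omega⟩
  simp [List.insertIdx_succ_cons]

theorem mem_u_of_count (u : List ℕ) (x : ℕ) (h : u.count x = 2) : x ∈ u := by
  rw [← List.count_pos_iff]; omega

/-- Backward: building a tree rep on `n` from one on `n-1`. -/
theorem build (n : ℕ) (hn : 2 ≤ n) (D : List ℕ) (p : ℕ) (hp1 : 1 ≤ p) (hp2 : p ≤ D.length)
    (hu : IsTreeRep (n-1) (D ++ [n-1])) :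
    IsTreeRep n (((D ++ [n-1]).insertIdx p n) ++ [n]) := by
  obtain ⟨hlen, hmem, hcount, hhead, h5, h6⟩ := hu
  set u := D ++ [n-1] with hudef
  have hpu : p ≤ u.length := by rw [hudef]; simp; omega
  have hnu : n ∉ u := fun h => by have := (hmem n h).2; omega
  have hDlen : D.length = 2 * (n-1) - 1 := by
    have : u.length = D.length + 1 := by simp [hudef]
    omega
  refine ⟨?_, ?_, ?_, ?_, ?_, ?_⟩
  · rw [List.length_append, List.length_insertIdx_of_le_length hpu]
    simp; omega
  · intro x hx
    rcases List.mem_append.1 hx with hx | hx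
    · rcases (List.mem_insertIdx hpu).1 hx with rfl | hx
      · omega
      · have := hmem x hx; omega
    · simp at hx; omega
  · intro i hi1 hi2
    rw [count_v u p i n hpu]
    by_cases hin : i = n
    · rw [if_pos hin, hin, List.count_eq_zero.2 hnu]
    · rw [if_neg hin, hcount i hi1 (by omega)]
  · rw [head_v u p n hp1 (by intro h; rw [h] at hpu; simp at hpu; omega)]
    exact hhead
  · intro i hi1 hi2
    by_cases hin : i = n
    · subst hin
      have h1n : firstOcc ((u.insertIdx p i) ++ [i]) i = p := by
        rw [firstOcc_append_of_mem _ _ _ ((List.mem_insertIdx hpu).2 (Or.inl rfl))]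
        exact indexOf_insertIdx_self i p u hnu hpu
      have h2n : secondOcc ((u.insertIdx p i) ++ [i]) (i-1) = D.length + 1 := by
        have hm : (i:ℕ)-1 ∈ u := by
          apply mem_u_of_count; exact hcount (i-1) (by omega) (by omega)
        rw [transfer_second u p (i-1) i hpu (by omega) hm]
        have : secondOcc u (i-1) = D.length := by
          rw [hudef]; exact secondOcc_append_single_self D (i-1)
        rw [this, if_pos hp2]
      rw [h1n, h2n]; omega
    · have hin' : i < n := lt_of_le_of_ne hi2 hin
      have hmi : i ∈ u := mem_u_of_count u i (hcount i (by omega) (by omega))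
      have hmi1 : (i:ℕ)-1 ∈ u := mem_u_of_count u (i-1) (hcount (i-1) (by omega) (by omega))
      rw [transfer_first u p i n hpu (by omega) hmi,
        transfer_second u p (i-1) n hpu (by omega) hmi1]
      rw [shift_lt_shift_iff]
      exact h5 i hi1 (by omega)
  · intro i hi1 hi2
    by_cases hin : i = n
    · subst hin
      have h2n : secondOcc ((u.insertIdx p i) ++ [i]) (i-1) = D.length + 1 := by
        have hm : (i:ℕ)-1 ∈ u := by
          apply mem_u_of_count; exact hcount (i-1) (by omega) (by omega)
        rw [transfer_second u p (i-1) i hpu (by omega) hm]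
        have : secondOcc u (i-1) = D.length := by
          rw [hudef]; exact secondOcc_append_single_self D (i-1)
        rw [this, if_pos hp2]
      have h2n' : secondOcc ((u.insertIdx p i) ++ [i]) i = (u.insertIdx p i).length := by
        exact secondOcc_append_single_self _ i
      rw [h2n, h2n', List.length_insertIdx_of_le_length hpu]
      have : u.length = D.length + 1 := by simp [hudef]
      omega
    · have hin' : i < n := lt_of_le_of_ne hi2 hin
      have hmi : i ∈ u := mem_u_of_count u i (hcount i (by omega) (by omega))
      have hmi1 : (i:ℕ)-1 ∈ u := mem_u_of_count u (i-1) (hcount (i-1) (by omega) (by omega))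
      rw [transfer_second u p i n hpu (by omega) hmi,
        transfer_second u p (i-1) n hpu (by omega) hmi1]
      rw [shift_lt_shift_iff]
      exact h6 i hi1 (by omega)


theorem secondOcc_chain {n : ℕ} {v : List ℕ}
    (h6 : ∀ i, 2 ≤ i → i ≤ n → secondOcc v (i - 1) < secondOcc v i) :
    ∀ b, b ≤ n → ∀ a, 1 ≤ a → a ≤ b → secondOcc v a + (b - a) ≤ secondOcc v b := by
  intro b
  induction b with
  | zero => intro _ a h1 h2; omega
  | succ b ih =>
    intro hbn a h1 h2
    rcases Nat.lt_or_ge a (b+1) with h | h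
    · have hab : a ≤ b := by omega
      have h1b : 1 ≤ b := by omega
      have := ih (by omega) a h1 hab
      have h6b := h6 (b+1) (by omega) hbn
      simp only [Nat.add_sub_cancel] at h6b
      omega
    · have : a = b + 1 := by omega
      subst this; omega

/-- Forward decomposition of a tree representation on `n ≥ 2`. -/
theorem decomp {n : ℕ} (hn : 2 ≤ n) {v : List ℕ} (hv : IsTreeRep n v) :
    ∃ (D : List ℕ) (p : ℕ), 1 ≤ p ∧ p ≤ D.length ∧ IsTreeRep (n-1) (D ++ [n-1]) ∧
      v = ((D ++ [n-1]).insertIdx p n) ++ [n] ∧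
      v.erase n = (D ++ [n-1]) ++ [n] ∧ firstOcc v n = p := by
  obtain ⟨hlen, hmem, hcount, hhead, h5, h6⟩ := hv
  have hchain := secondOcc_chain h6
  have hvne : v ≠ [] := by intro h; rw [h] at hlen; simp at hlen; omega
  obtain ⟨v', x, hvx⟩ := (List.eq_nil_or_concat v).resolve_left hvne
  rw [List.concat_eq_append] at hvx
  have hv'len : v'.length = 2*n - 1 := by
    rw [hvx] at hlen; simp at hlen; omega
  have hsecn_le : secondOcc v n ≤ 2*n - 1 := by
    have := secondOcc_le v n; omega
  have hxn : x = n := by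
    have hsx : secondOcc v x = 2*n - 1 := by
      rw [hvx, secondOcc_append_single_self]; omega
    have hxbd := hmem x (by rw [hvx]; simp)
    by_contra hne
    have := hchain n le_rfl x hxbd.1 (by omega)
    omega
  rw [hxn] at hvx; clear hxn
  have hv'ne : v' ≠ [] := by intro h; rw [h] at hv'len; simp at hv'len; omega
  obtain ⟨w', y, hv'y⟩ := (List.eq_nil_or_concat v').resolve_left hv'ne
  rw [List.concat_eq_append] at hv'y
  rw [hv'y] at hvx
  have hw'len : w'.length = 2*n - 2 := by
    rw [hv'y] at hv'len; simp at hv'len; omega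
  have hsecn1_lt : secondOcc v (n-1) < secondOcc v n := h6 n hn le_rfl
  have hfirstn_lt : firstOcc v n < secondOcc v (n-1) := h5 n hn le_rfl
  have hyn : y ≠ n := by
    intro hyeq
    rw [hyeq] at hvx
    have hcnt : w'.count n = 0 := by
      have := hcount n (by omega) le_rfl
      rw [hvx] at this
      simp [List.count_append] at this
      omega
    have hfo : firstOcc v n = 2*n - 2 := by
      rw [hvx, firstOcc_append_of_mem _ _ _ (by simp)]
      unfold firstOcc
      rw [List.idxOf_append_of_notMem (List.count_eq_zero.1 hcnt)]
      simp [hw'len]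
    omega
  have hy : y = n - 1 := by
    have hybd := hmem y (by rw [hvx]; simp)
    have hsy : secondOcc v y = 2*n - 2 := by
      rw [hvx, secondOcc_append_single _ _ _ hyn, secondOcc_append_single_self]
      omega
    by_contra hne
    have := hchain (n-1) (by omega) y hybd.1 (by omega)
    omega
  rw [hy] at hvx
  clear hv'y hyn hy hv'len hv'ne
  -- now hvx : v = (w' ++ [n-1]) ++ [n]
  have hn1n : (n : ℕ) - 1 ≠ n := by omega
  have hnw' : n ∈ w' := by
    have := hcount n (by omega) le_rfl
    rw [hvx] at this
    simp [List.count_append, List.count_singleton', hn1n] at this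
    rw [← List.count_pos_iff]
    omega
  set p := firstOcc v n with hpdef
  have hp_eq : p = List.idxOf n w' := by
    rw [hpdef, hvx]
    unfold firstOcc
    rw [List.idxOf_append_of_mem (by exact List.mem_append_left _ hnw'),
      List.idxOf_append_of_mem hnw']
  have hplt : p < w'.length := by
    rw [hp_eq]; exact List.idxOf_lt_length_iff.2 hnw'
  have hp1 : 1 ≤ p := by
    rcases w' with _ | ⟨c, t⟩
    · simp at hnw'
    · have hc1 : c = 1 := by
        rw [hvx] at hhead; simpa using hhead
      have hcn : c ≠ n := by omega
      rw [hp_eq, List.idxOf_cons_ne _ hcn]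
      omega
  set D := w'.erase n with hDdef
  have hDlen : D.length + 1 = w'.length := List.length_erase_add_one hnw'
  have hpD : p ≤ D.length := by omega
  have hverase : v.erase n = (D ++ [n-1]) ++ [n] := by
    rw [hvx, List.erase_append_left _ (List.mem_append_left _ hnw'),
      List.erase_append_left _ hnw']
  have hnv : n ∈ v := by rw [hvx]; simp
  have hvdecomp : v = ((D ++ [n-1]).insertIdx p n) ++ [n] := by
    conv_lhs => rw [← erase_insertIdx_indexOf n v hnv]
    rw [show List.idxOf n v = p from hpdef.symm, hverase,
      insertIdx_append_left n p _ _ (by simp only [List.length_append, List.length_singleton]; omega)]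
  set u := D ++ [n-1] with hudef
  have hulen : u.length = 2*(n-1) := by
    rw [hudef]; simp; omega
  have hpu : p ≤ u.length := by omega
  have hcnt_v : ∀ x, v.count x = u.count x + (if x = n then 2 else 0) := by
    intro x
    rw [hvdecomp, count_v u p x n hpu]
  have hnu : n ∉ u := by
    have := hcnt_v n
    rw [hcount n (by omega) le_rfl, if_pos rfl] at this
    rw [← List.count_eq_zero (a := n) (l := u)] at *
    omega
  have hcnt_u : ∀ i, 1 ≤ i → i ≤ n - 1 → u.count i = 2 := by
    intro i hi1 hi2
    have := hcnt_v i
    rw [hcount i hi1 (by omega), if_neg (by omega)] at this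
    omega
  have hmem_u : ∀ x ∈ u, 1 ≤ x ∧ x ≤ n - 1 := by
    intro x hx
    have hxv : x ∈ v := by
      rw [hvdecomp]
      exact List.mem_append_left _ ((List.mem_insertIdx hpu).2 (Or.inr hx))
    have := hmem x hxv
    have hxne : x ≠ n := fun h => hnu (h ▸ hx)
    omega
  refine ⟨D, p, hp1, hpD, ⟨hulen, hmem_u, hcnt_u, ?_, ?_, ?_⟩, hvdecomp, hverase, rfl⟩
  · rw [hvdecomp, head_v u p n hp1 (by intro h; rw [h] at hulen; simp at hulen; omega)] at hhead
    exact hhead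
  · intro i hi1 hi2
    have hmi : i ∈ u := mem_u_of_count u i (hcnt_u i (by omega) hi2)
    have hmi1 : (i:ℕ)-1 ∈ u := mem_u_of_count u (i-1) (hcnt_u (i-1) (by omega) (by omega))
    have := h5 i hi1 (by omega)
    rw [hvdecomp, transfer_first u p i n hpu (by omega) hmi,
      transfer_second u p (i-1) n hpu (by omega) hmi1, shift_lt_shift_iff] at this
    exact this
  · intro i hi1 hi2
    have hmi : i ∈ u := mem_u_of_count u i (hcnt_u i (by omega) hi2)
    have hmi1 : (i:ℕ)-1 ∈ u := mem_u_of_count u (i-1) (hcnt_u (i-1) (by omega) (by omega))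
    have := h6 i hi1 (by omega)
    rw [hvdecomp, transfer_second u p i n hpu (by omega) hmi,
      transfer_second u p (i-1) n hpu (by omega) hmi1, shift_lt_shift_iff] at this
    exact this


theorem ins_end (D : List ℕ) (x y : ℕ) :
    (D ++ [y]).insertIdx D.length x = (D ++ [x]) ++ [y] := by
  rw [insertIdx_append_left x D.length D [y] le_rfl, List.insertIdx_length_self]

theorem erase_insertIdx_self (n : ℕ) : ∀ (q : ℕ) (l : List ℕ), n ∉ l → q ≤ l.length →
    (l.insertIdx q n).erase n = l
  | 0, l, _, _ => by simp [List.insertIdx_zero]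
  | q+1, [], _, hq => by simp at hq
  | q+1, b :: t, h, hq => by
    have hbn : b ≠ n := fun h' => h (h' ▸ List.mem_cons_self)
    rw [List.insertIdx_succ_cons, List.erase_cons_tail]
    · rw [erase_insertIdx_self n q t (fun h' => h (List.mem_cons_of_mem _ h'))
        (Nat.le_of_succ_le_succ hq)]
    · simp [hbn]

theorem erase_insert_self (l : List ℕ) (q n : ℕ) (hq : q ≤ l.length) (hnl : n ∉ l) :
    ((l.insertIdx q n) ++ [n]).erase n = l ++ [n] := by
  rw [List.erase_append_left _ ((List.mem_insertIdx hq).2 (Or.inl rfl)),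
    erase_insertIdx_self n q l hnl hq]

theorem secondOcc_erase_eq (E : List ℕ) (x a b : ℕ) (hxa : x ≠ a) (hxb : x ≠ b) :
    secondOcc (((E ++ [a]) ++ [b]) ++ [a]) x = secondOcc (E ++ [b]) x := by
  rw [secondOcc_append_single _ _ _ hxa, secondOcc_append_single _ _ _ hxb,
    secondOcc_append_single _ _ _ hxa, secondOcc_append_single _ _ _ hxb]

/-- A tree representation ends with `n`. -/
theorem last_eq {n : ℕ} (hn : 1 ≤ n) {v : List ℕ} (hv : IsTreeRep n v) :
    ∃ D, v = D ++ [n] := by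
  obtain ⟨hlen, hmem, hcount, hhead, h5, h6⟩ := hv
  have hchain := secondOcc_chain h6
  have hvne : v ≠ [] := by intro h; rw [h] at hlen; simp at hlen; omega
  obtain ⟨v', x, hvx⟩ := (List.eq_nil_or_concat v).resolve_left hvne
  rw [List.concat_eq_append] at hvx
  have hsecn_le : secondOcc v n ≤ 2*n - 1 := by
    have := secondOcc_le v n; omega
  have hxn : x = n := by
    have hsx : secondOcc v x = 2*n - 1 := by
      rw [hvx, secondOcc_append_single_self]
      rw [hvx] at hlen; simp at hlen; omega
    have hxbd := hmem x (by rw [hvx]; simp)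
    by_contra hne
    have := hchain n le_rfl x hxbd.1 (by omega)
    omega
  exact ⟨v', by rw [hvx, hxn]⟩

theorem treeRep_one {v : List ℕ} (hv : IsTreeRep 1 v) : v = [1, 1] := by
  obtain ⟨hlen, hmem, hcount, hhead, h5, h6⟩ := hv
  have hc := hcount 1 le_rfl le_rfl
  rcases v with _ | ⟨a, _ | ⟨b, _ | ⟨c, t⟩⟩⟩ <;> simp at hlen
  have ha : a = 1 := by simpa using hhead
  have hb : b = 1 := by
    subst ha
    rcases eq_or_ne b 1 with h | h
    · exact h
    · simp [List.count_cons, h] at hc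
  rw [ha, hb]

theorem cat_one : caterpillar 1 = [1, 1] := by decide

theorem cat_decomp (n : ℕ) (hn : 2 ≤ n) :
    ∃ C : List ℕ, caterpillar (n-1) = C ++ [n-1] ∧
      caterpillar n = ((C ++ [n]) ++ [n-1]) ++ [n] := by
  obtain ⟨m, rfl⟩ : ∃ m, n = m + 2 := ⟨n - 2, by omega⟩
  refine ⟨1 :: ((List.range' 2 m).flatMap fun k => [k, k - 1]), ?_, ?_⟩
  · show caterpillar (m + 1) = _
    unfold caterpillar
    simp
  · unfold caterpillar
    have : m + 2 - 1 = m + 1 := by omega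
    rw [this, List.range'_concat]
    simp only [List.flatMap_append]
    have h2m : 2 + 1 * m = m + 2 := by omega
    rw [h2m]
    simp [List.flatMap_cons]

/-- Hop chains whose intermediate lists are all tree representations. -/
def SChain (n m : ℕ) (u v : List ℕ) : Prop :=
  ∃ f : ℕ → List ℕ, f 0 = u ∧ f m = v ∧ (∀ j, j ≤ m → IsTreeRep n (f j)) ∧
    ∀ j < m, IsHop n (f j) (f (j + 1))

theorem SChain.hopChain {n m : ℕ} {u v : List ℕ} (h : SChain n m u v) : HopChain n m u v := by
  obtain ⟨f, h0, hm, _, hh⟩ := h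
  exact ⟨f, h0, hm, hh⟩

theorem SChain.refl {n : ℕ} {u : List ℕ} (h : IsTreeRep n u) : SChain n 0 u u :=
  ⟨fun _ => u, rfl, rfl, fun _ _ => h, fun j hj => by omega⟩

theorem SChain.single {n : ℕ} {u v : List ℕ} (h : IsHop n u v) (hu : IsTreeRep n u)
    (hv : IsTreeRep n v) : SChain n 1 u v := by
  refine ⟨fun j => if j = 0 then u else v, by simp, by simp, ?_, ?_⟩
  · intro j hj
    by_cases hj0 : j = 0 <;> simp [hj0, hu, hv]
  · intro j hj
    have : j = 0 := by omega
    simp [this, h]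

theorem SChain.trans {n m₁ m₂ : ℕ} {u w v : List ℕ} (h1 : SChain n m₁ u w)
    (h2 : SChain n m₂ w v) : SChain n (m₁ + m₂) u v := by
  obtain ⟨f₁, hf10, hf1m, hf1r, hf1h⟩ := h1
  obtain ⟨f₂, hf20, hf2m, hf2r, hf2h⟩ := h2
  refine ⟨fun j => if j ≤ m₁ then f₁ j else f₂ (j - m₁), by simp [hf10], ?_, ?_, ?_⟩
  · show (if m₁ + m₂ ≤ m₁ then f₁ (m₁ + m₂) else f₂ (m₁ + m₂ - m₁)) = v
    by_cases h : m₁ + m₂ ≤ m₁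
    · have hm2 : m₂ = 0 := by omega
      rw [if_pos h]
      have : m₁ + m₂ = m₁ := by omega
      rw [this, hf1m, ← hf20, ← hm2, hf2m]
    · rw [if_neg h]
      have : m₁ + m₂ - m₁ = m₂ := by omega
      rw [this, hf2m]
  · intro j hj
    show IsTreeRep n (if j ≤ m₁ then f₁ j else f₂ (j - m₁))
    by_cases h : j ≤ m₁
    · simp only [if_pos h]; exact hf1r j h
    · simp only [if_neg h]; exact hf2r (j - m₁) (by omega)
  · intro j hj
    show IsHop n (if j ≤ m₁ then f₁ j else f₂ (j - m₁))
      (if j + 1 ≤ m₁ then f₁ (j + 1) else f₂ (j + 1 - m₁))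
    by_cases h : j + 1 ≤ m₁
    · rw [if_pos (by omega), if_pos h]
      exact hf1h j (by omega)
    · by_cases h' : j ≤ m₁
      · have hjm : j = m₁ := by omega
        subst hjm
        rw [if_pos h', if_neg h, hf1m, ← hf20]
        have h1 : j + 1 - j = 1 := by omega
        rw [h1]
        exact hf2h 0 (by omega)
      · rw [if_neg h', if_neg h]
        have : j + 1 - m₁ = (j - m₁) + 1 := by omega
        rw [this]
        exact hf2h (j - m₁) (by omega)

theorem SChain.map {n n' m : ℕ} {u v : List ℕ} (g : List ℕ → List ℕ)
    (hrep : ∀ w, IsTreeRep n' w → IsTreeRep n (g w))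
    (hhop : ∀ w w', IsTreeRep n' w → IsTreeRep n' w' → IsHop n' w w' → IsHop n (g w) (g w'))
    (h : SChain n' m u v) : SChain n m (g u) (g v) := by
  obtain ⟨f, h0, hm, hr, hh⟩ := h
  refine ⟨fun j => g (f j), by show g (f 0) = g u; rw [h0], by show g (f m) = g v; rw [hm],
    fun j hj => hrep _ (hr j hj), ?_⟩
  intro j hj
  exact hhop _ _ (hr j (by omega)) (hr (j+1) (by omega)) (hh j hj)


theorem hop_fwd {n : ℕ} (hn : 2 ≤ n) {v D : List ℕ} {p : ℕ}
    (hvdec : v = ((D ++ [n-1]).insertIdx p n) ++ [n])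
    (hverase : v.erase n = (D ++ [n-1]) ++ [n])
    (hD1 : 1 ≤ D.length) :
    IsHop n v (((D ++ [n-1]).insertIdx D.length n) ++ [n]) := by
  refine ⟨n, D.length, hn, le_rfl, hD1, ?_, ?_⟩
  · rw [hverase, secondOcc_append_single _ _ _ (show (n:ℕ)-1 ≠ n by omega),
      secondOcc_append_single_self]
  · rw [hverase]
    conv_rhs => rw [insertIdx_append_left n D.length (D ++ [n-1]) [n]
      (by simp only [List.length_append, List.length_singleton]; omega)]

theorem hop_back {n : ℕ} (hn : 2 ≤ n) {D : List ℕ} {p : ℕ} (hp1 : 1 ≤ p) (hpD : p ≤ D.length)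
    (hnD : n ∉ D ++ [n-1]) :
    IsHop n (((D ++ [n-1]).insertIdx D.length n) ++ [n]) (((D ++ [n-1]).insertIdx p n) ++ [n]) := by
  have herase : ((((D ++ [n-1])).insertIdx D.length n) ++ [n]).erase n = (D ++ [n-1]) ++ [n] :=
    erase_insert_self _ _ _ (by simp) hnD
  refine ⟨n, p, hn, le_rfl, hp1, ?_, ?_⟩
  · rw [herase, secondOcc_append_single _ _ _ (show (n:ℕ)-1 ≠ n by omega),
      secondOcc_append_single_self]
    exact hpD
  · rw [herase]
    conv_rhs => rw [insertIdx_append_left n p (D ++ [n-1]) [n]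
      (by simp only [List.length_append, List.length_singleton]; omega)]

theorem hop_lift {n : ℕ} (hn : 2 ≤ n) {w w' : List ℕ} (hw : IsTreeRep (n-1) w)
    (hw' : IsTreeRep (n-1) w') (h : IsHop (n-1) w w') :
    IsHop n (((w.dropLast ++ [n]) ++ [n-1]) ++ [n]) (((w'.dropLast ++ [n]) ++ [n-1]) ++ [n]) := by
  obtain ⟨i, k, hi2, hin, hk1, hkle, hw'eq⟩ := h
  have hn1 : 1 ≤ n - 1 := by omega
  obtain ⟨D, rfl⟩ := last_eq hn1 hw
  obtain ⟨D', hD'⟩ := last_eq hn1 hw'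
  have h5w := hw.2.2.2.2.1 i hi2 hin
  have hlt : firstOcc (D ++ [n-1]) i < D.length := by
    have h2 := secondOcc_le (D ++ [n-1]) (i-1)
    have h3 : (D ++ [n-1]).length = D.length + 1 := by simp
    omega
  have hiD : i ∈ D := by
    by_contra hni
    unfold firstOcc at hlt
    rw [List.idxOf_append_of_notMem hni] at hlt
    omega
  have herase : (D ++ [n-1]).erase i = (D.erase i) ++ [n-1] := List.erase_append_left _ hiD
  have hkE : k ≤ (D.erase i).length := by
    rw [herase] at hkle
    have h2 := secondOcc_le ((D.erase i) ++ [n-1]) (i-1)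
    have h3 : ((D.erase i) ++ [n-1]).length = (D.erase i).length + 1 := by simp
    omega
  have hw'2 : w' = ((D.erase i).insertIdx k i) ++ [n-1] := by
    rw [hw'eq, herase, insertIdx_append_left i k (D.erase i) [n-1] hkE]
  have hiN : i ≠ n := by omega
  refine ⟨i, k, hi2, by omega, hk1, ?_, ?_⟩
  · rw [List.dropLast_concat,
      List.erase_append_left _ (List.mem_append_left _ (List.mem_append_left _ hiD)),
      List.erase_append_left _ (List.mem_append_left _ hiD),
      List.erase_append_left _ hiD,
      secondOcc_erase_eq (D.erase i) (i-1) n (n-1) (by omega) (by omega), ← herase]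
    exact hkle
  · rw [List.dropLast_concat,
      List.erase_append_left _ (List.mem_append_left _ (List.mem_append_left _ hiD)),
      List.erase_append_left _ (List.mem_append_left _ hiD),
      List.erase_append_left _ hiD,
      insertIdx_append_left i k _ _ (by simp only [List.length_append, List.length_singleton]; omega),
      insertIdx_append_left i k _ _ (by simp only [List.length_append, List.length_singleton]; omega),
      insertIdx_append_left i k _ _ hkE,
      hw'2, List.dropLast_concat]

theorem reach : ∀ n, 1 ≤ n → ∀ v, IsTreeRep n v →
    (∃ m, SChain n m v (caterpillar n)) ∧ (∃ m, SChain n m (caterpillar n) v) := by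
  intro n
  induction n with
  | zero => omega
  | succ n ih =>
    intro _ v hv
    by_cases h2 : 2 ≤ n + 1
    case neg =>
      have hn0 : n = 0 := by omega
      subst hn0
      have hveq : v = [1, 1] := treeRep_one hv
      refine ⟨⟨0, ?_⟩, ⟨0, ?_⟩⟩ <;> rw [hveq, cat_one] <;> exact SChain.refl (hveq ▸ hv)
    case pos =>
      obtain ⟨D, p, hp1, hpD, hu, hvdec, hverase, hfo⟩ := decomp h2 hv
      simp only [Nat.add_sub_cancel] at hu hvdec hverase
      obtain ⟨⟨m1, c1⟩, ⟨m2, c2⟩⟩ := ih (by omega) (D ++ [n]) hu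
      obtain ⟨C, hcat1, hcat2⟩ := cat_decomp (n+1) h2
      simp only [Nat.add_sub_cancel] at hcat1 hcat2
      have hGrep : ∀ w, IsTreeRep n w → IsTreeRep (n+1)
          (((w.dropLast ++ [n+1]) ++ [n]) ++ [n+1]) := by
        intro w hw
        obtain ⟨D₀, rfl⟩ := last_eq (by omega) hw
        have hlen0 : D₀.length = 2*n - 1 := by
          have h := hw.1
          simp only [List.length_append, List.length_singleton] at h
          omega
        rw [List.dropLast_concat, ← ins_end D₀ (n+1) n]
        exact build (n+1) h2 D₀ D₀.length (by omega) le_rfl hw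
      have hGhop : ∀ w w', IsTreeRep n w → IsTreeRep n w' → IsHop n w w' →
          IsHop (n+1) (((w.dropLast ++ [n+1]) ++ [n]) ++ [n+1])
            (((w'.dropLast ++ [n+1]) ++ [n]) ++ [n+1]) := by
        intro w w' hw hw' hh
        exact hop_lift h2 hw hw' hh
      have hc1' : SChain (n+1) m1 (((((D ++ [n]).dropLast ++ [n+1]) ++ [n]) ++ [n+1]))
          ((((caterpillar n).dropLast ++ [n+1]) ++ [n]) ++ [n+1]) :=
        SChain.map (fun w => ((w.dropLast ++ [n+1]) ++ [n]) ++ [n+1]) hGrep hGhop c1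
      have hc2' : SChain (n+1) m2 ((((caterpillar n).dropLast ++ [n+1]) ++ [n]) ++ [n+1])
          (((((D ++ [n]).dropLast ++ [n+1]) ++ [n]) ++ [n+1])) :=
        SChain.map (fun w => ((w.dropLast ++ [n+1]) ++ [n]) ++ [n+1]) hGrep hGhop c2
      have hGD : ((((D ++ [n]).dropLast ++ [n+1]) ++ [n]) ++ [n+1])
          = ((D ++ [n]).insertIdx D.length (n+1)) ++ [n+1] := by
        rw [List.dropLast_concat, ins_end]
      have hGcat : (((caterpillar n).dropLast ++ [n+1]) ++ [n]) ++ [n+1]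
          = caterpillar (n+1) := by
        rw [hcat1, List.dropLast_concat, hcat2]
      rw [hGD, hGcat] at hc1' hc2'
      have hrepG : IsTreeRep (n+1) (((D ++ [n]).insertIdx D.length (n+1)) ++ [n+1]) :=
        hGD ▸ hGrep _ hu
      have hhopf : IsHop (n+1) v (((D ++ [n]).insertIdx D.length (n+1)) ++ [n+1]) :=
        hop_fwd h2 hvdec hverase (by omega)
      have hhopb : IsHop (n+1) (((D ++ [n]).insertIdx D.length (n+1)) ++ [n+1]) v := by
        have hnD : (n+1) ∉ D ++ [n] := by
          intro hmem'
          have := hu.2.1 _ hmem'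
          omega
        have hb := hop_back h2 hp1 hpD hnD
        simp only [Nat.add_sub_cancel] at hb
        rw [← hvdec] at hb
        exact hb
      constructor
      · exact ⟨1 + m1, (SChain.single hhopf hv hrepG).trans hc1'⟩
      · exact ⟨m2 + 1, hc2'.trans (SChain.single hhopb hrepG hv)⟩

end MyAux

/-- For `n ≥ 2`, every tree representation on `{1,…,n}` can be transformed by a
finite sequence of HOPs into the caterpillar representation; consequently, any
tree representation can be transformed into any other by a finite sequence of
HOPs (the HOP graph on tree representations is connected). -/
theorem stmt7 (n : ℕ) (hn : 2 ≤ n) :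
    (∀ v : List ℕ, IsTreeRep n v → ∃ m, HopChain n m v (caterpillar n)) ∧
    (∀ u v : List ℕ, IsTreeRep n u → IsTreeRep n v → ∃ m, HopChain n m u v) := by
  constructor
  · intro v hv
    obtain ⟨m, c⟩ := (MyAux.reach n (by omega) v hv).1
    exact ⟨m, c.hopChain⟩
  · intro u v hu hv
    obtain ⟨m1, c1⟩ := (MyAux.reach n (by omega) u hu).1
    obtain ⟨m2, c2⟩ := (MyAux.reach n (by omega) v hv).2
    exact ⟨m1 + m2, (c1.trans c2).hopChain⟩
end

section
/- Let v be a tree representation on {1,…,n} and, for k ∈ {1,…,n}, let p_k denote the (1-indexed) position in v of the second occurrence of k. Then the total number of HOP moves available on v, namely Σ_{i=2}^{n} (p_{i−1} − 2) (for each i ∈ {2,…,n}, the first occurrence of i may be moved to any of the p_{i−1} − 2 positions strictly after position 1 and weakly before p_{i−1}, other than its current position), is at least (n−1)². -/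
/-- no occurrence of `x` strictly after `secondOcc v x`. -/
lemma count_drop_secondOcc (v : List ℕ) (x : ℕ) (hx : x ∈ v) :
    (v.drop (secondOcc v x + 1)).count x = 0 := by
  have hr : v.reverse.idxOf x < v.length := by
    simpa using List.idxOf_lt_length_iff.2 (List.mem_reverse.2 hx)
  rw [List.count_eq_zero]
  intro hmem
  have h1 : x ∈ (v.drop (secondOcc v x + 1)).reverse := List.mem_reverse.2 hmem
  rw [List.reverse_drop] at h1
  have h2 : v.length - (secondOcc v x + 1) = v.reverse.idxOf x := by
    unfold secondOcc; omega
  rw [h2] at h1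
  have h3 : v.reverse.idxOf x = List.idxOf x (v.reverse.take (v.reverse.idxOf x) ++ v.reverse.drop (v.reverse.idxOf x)) := by
    rw [List.take_append_drop]
  rw [List.idxOf_append_of_mem h1] at h3
  have h4 := List.idxOf_lt_length_iff.2 h1
  have h5 := List.length_take_le (v.reverse.idxOf x) v.reverse
  omega

lemma count_take_of_secondOcc_lt (v : List ℕ) (x m : ℕ) (hx : x ∈ v)
    (h : secondOcc v x < m) : (v.take m).count x = v.count x := by
  have h0 : v.count x = (v.take m).count x + (v.drop m).count x := by
    rw [← List.count_append, List.take_append_drop]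
  have h1 : (v.drop m).count x = 0 := by
    have : v.drop m = (v.drop (secondOcc v x + 1)).drop (m - (secondOcc v x + 1)) := by
      rw [List.drop_drop]; congr 1; omega
    rw [this, List.count_eq_zero]
    intro hmem
    have := List.count_eq_zero.1 (count_drop_secondOcc v x hx)
    exact this (List.mem_of_mem_drop hmem)
  omega

lemma one_le_count_take (v : List ℕ) (x m : ℕ) (hx : firstOcc v x < m)
    (hxl : firstOcc v x < v.length) : 1 ≤ (v.take m).count x := by
  rw [Nat.one_le_iff_ne_zero, Ne, List.count_eq_zero, not_not]
  have : (v.take m)[firstOcc v x]'(by simp [List.length_take]; omega) = x := by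
    rw [List.getElem_take]
    exact List.getElem_idxOf hxl
  exact this ▸ List.getElem_mem _

lemma sum_count_le_length (S : Finset ℕ) (l : List ℕ) :
    ∑ j ∈ S, l.count j ≤ l.length := by
  calc ∑ j ∈ S, l.count j = ∑ j ∈ S.filter (· ∈ l), l.count j := by
        refine (Finset.sum_filter_of_ne ?_).symm
        intro j _ hc
        by_contra hj
        exact hc (List.count_eq_zero.2 hj)
    _ ≤ ∑ j ∈ l.toFinset, l.count j := by
        refine Finset.sum_le_sum_of_subset ?_
        intro j hj
        simp only [Finset.mem_filter] at hj
        exact List.mem_toFinset.2 hj.2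
    _ = l.length := List.sum_toFinset_count_eq_length l

lemma secondOcc_mono (n : ℕ) (v : List ℕ) (hv : IsTreeRep n v) :
    ∀ j k, 1 ≤ j → j ≤ k → k ≤ n → secondOcc v j ≤ secondOcc v k := by
  intro j k hj hjk hk
  induction k with
  | zero => omega
  | succ m ih =>
    rcases Nat.lt_or_ge j (m+1) with h | h
    · have h6 := hv.2.2.2.2.2 (m+1) (by omega) hk
      simp only [Nat.add_sub_cancel] at h6
      exact le_trans (ih (by omega) (by omega)) (le_of_lt h6)
    · have : j = m + 1 := by omega
      subst this; rfl

lemma key_secondOcc_lb (n : ℕ) (v : List ℕ) (hv : IsTreeRep n v) (k : ℕ)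
    (h1 : 1 ≤ k) (h2 : k + 1 ≤ n) : 2 * k ≤ secondOcc v k := by
  obtain ⟨hlen, _hmem, hcount, _h1st, h5, _h6⟩ := hv
  set m := secondOcc v k + 1 with hm
  have hmemv : ∀ j, 1 ≤ j → j ≤ n → j ∈ v := fun j ha hb =>
    List.count_pos_iff.1 (by rw [hcount j ha hb]; omega)
  have hsum : ∑ j ∈ Finset.Icc 1 (k+1), (v.take m).count j ≤ m := by
    refine le_trans (sum_count_le_length _ _) ?_
    simp [List.length_take]
  have hfirst : firstOcc v (k+1) < v.length :=
    List.idxOf_lt_length_iff.2 (hmemv (k+1) (by omega) h2)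
  have hlast : 1 ≤ (v.take m).count (k+1) := by
    refine one_le_count_take v (k+1) m ?_ hfirst
    have := h5 (k+1) (by omega) h2
    simp only [Nat.add_sub_cancel] at this
    omega
  have hfull : ∀ j ∈ Finset.Icc 1 k, (v.take m).count j = 2 := by
    intro j hj
    simp only [Finset.mem_Icc] at hj
    rw [count_take_of_secondOcc_lt v j m (hmemv j hj.1 (by omega))
      (by have := secondOcc_mono n v ⟨hlen, _hmem, hcount, _h1st, h5, _h6⟩ j k hj.1 hj.2 (by omega); omega)]
    exact hcount j hj.1 (by omega)
  have hsplit : ∑ j ∈ Finset.Icc 1 (k+1), (v.take m).count j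
      = (∑ j ∈ Finset.Icc 1 k, (v.take m).count j) + (v.take m).count (k+1) :=
    Finset.sum_Icc_succ_top (by omega) _
  have : ∑ j ∈ Finset.Icc 1 k, (v.take m).count j = 2 * k := by
    rw [Finset.sum_congr rfl hfull]
    simp [Nat.Icc_eq_range', mul_comm]
  omega

lemma sum_odd_Icc (n : ℕ) : ∑ i ∈ Finset.Icc 2 n, (2 * (i - 1) - 1) = (n - 1) ^ 2 := by
  induction n with
  | zero => simp
  | succ m ih =>
    rcases Nat.lt_or_ge m 1 with h | h
    · interval_cases m <;> simp
    · rw [Finset.sum_Icc_succ_top (by omega)]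
      rw [ih]
      have h2 : (m + 1 - 1) ^ 2 = (m - 1) ^ 2 + (2 * (m + 1 - 1) - 1) := by
        obtain ⟨p, rfl⟩ : ∃ p, m = p + 1 := ⟨m - 1, by omega⟩
        simp only [Nat.add_sub_cancel]
        ring_nf
        omega
      omega

/-- For a tree representation `v` on `{1,…,n}`, with `p_k = secondOcc v k + 1`
the 1-indexed position of the second occurrence of `k`, the total number of HOP
moves available on `v`, namely `Σ_{i=2}^{n} (p_{i−1} − 2)`, is at least `(n−1)²`. -/
theorem stmt9 (n : ℕ) (v : List ℕ) (hv : IsTreeRep n v) :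
    (n - 1) ^ 2 ≤ ∑ i ∈ Finset.Icc 2 n, ((secondOcc v (i - 1) + 1) - 2) := by
  rw [← sum_odd_Icc n]
  refine Finset.sum_le_sum ?_
  intro i hi
  simp only [Finset.mem_Icc] at hi
  have := key_secondOcc_lb n v hv (i - 1) (by omega) (by omega)
  omega
end
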